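/- arXiv:1202.4010 — 7 statements merged into one kernel-verified Lean document; each statement's English description precedes it below -/
import Mathlib

section
/- For every quantum channel Φ from 2×2 complex matrices to 4×4 complex matrices (given by Kraus operators A_i with Σ_i A_i*A_i = I, acting as Φ(ρ) = Σ_i A_i ρ A_i*), the average cloning success probability (1/4) Σ_{k=1}^{4} ⟨ψ_k ⊗ ψ_k| Φ(|ψ_k⟩⟨ψ_k|) |ψ_k ⊗ ψ_k⟩ over the four BB84 states is at most 3/4. -/
open Matrix

/-- The four BB84 states in ℂ². -/
noncomputable def bb84 : Fin 4 → (Fin 2 → ℂ)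
  | 0 => ![1, 0]
  | 1 => ![0, 1]
  | 2 => ![(Real.sqrt 2 : ℂ)⁻¹, (Real.sqrt 2 : ℂ)⁻¹]
  | 3 => ![(Real.sqrt 2 : ℂ)⁻¹, -(Real.sqrt 2 : ℂ)⁻¹]

/-- Tensor product of two qubit vectors, as a vector on `Fin 2 × Fin 2`. -/
def tens (u v : Fin 2 → ℂ) : Fin 2 × Fin 2 → ℂ := fun p => u p.1 * v p.2

lemma normSq_rt2 : Complex.normSq ((Real.sqrt 2 : ℂ))⁻¹ = 1/2 := by
  rw [map_inv₀, Complex.normSq_ofReal, Real.mul_self_sqrt (by norm_num)]; norm_num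

lemma block (y1 y2 y3 y4 : ℂ) :
    Complex.normSq y1 + (1/4) * Complex.normSq (y1+y2+y3+y4)
      ≤ (3/2) * (Complex.normSq y1 + Complex.normSq y2 + Complex.normSq y3 + Complex.normSq y4) := by
  simp only [Complex.normSq_apply, Complex.add_re, Complex.add_im]
  nlinarith [sq_nonneg (y1.re - y2.re - y3.re - y4.re), sq_nonneg (y1.im - y2.im - y3.im - y4.im),
    sq_nonneg (y2.re - y3.re), sq_nonneg (y3.re - y4.re), sq_nonneg (y2.re - y4.re),
    sq_nonneg (y2.im - y3.im), sq_nonneg (y3.im - y4.im), sq_nonneg (y2.im - y4.im)]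

lemma para (u v : ℂ) : Complex.normSq (u+v) + Complex.normSq (u-v)
    = 2 * Complex.normSq u + 2 * Complex.normSq v := by
  simp only [Complex.normSq_apply, Complex.add_re, Complex.add_im, Complex.sub_re, Complex.sub_im]
  ring

lemma key (B : Matrix (Fin 2 × Fin 2) (Fin 2) ℂ) :
    ∑ k : Fin 4, Complex.normSq (star (tens (bb84 k) (bb84 k)) ⬝ᵥ B.mulVec (bb84 k))
      ≤ (3/2) * ∑ p : Fin 2 × Fin 2, ∑ t : Fin 2, Complex.normSq (B p t) := by
  set r : ℂ := ((Real.sqrt 2 : ℂ))⁻¹ with hrdef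
  set x1 := B (0,0) 0; set x2 := B (0,0) 1; set x3 := B (0,1) 0; set x4 := B (0,1) 1
  set x5 := B (1,0) 0; set x6 := B (1,0) 1; set x7 := B (1,1) 0; set x8 := B (1,1) 1
  have e0 : star (tens (bb84 0) (bb84 0)) ⬝ᵥ B.mulVec (bb84 0) = x1 := by
    simp [bb84, tens, dotProduct, Matrix.mulVec, Fintype.sum_prod_type, Fin.sum_univ_two,
      x1]
  have e1 : star (tens (bb84 1) (bb84 1)) ⬝ᵥ B.mulVec (bb84 1) = x8 := by
    simp [bb84, tens, dotProduct, Matrix.mulVec, Fintype.sum_prod_type, Fin.sum_univ_two,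
      x8]
  have e2 : star (tens (bb84 2) (bb84 2)) ⬝ᵥ B.mulVec (bb84 2)
      = r * r * r * (x1 + x2 + x3 + x4 + x5 + x6 + x7 + x8) := by
    simp [bb84, tens, dotProduct, Matrix.mulVec, Fintype.sum_prod_type, Fin.sum_univ_two,
      Complex.star_def, map_inv₀, Complex.conj_ofReal, hrdef,
      x1, x2, x3, x4, x5, x6, x7, x8]
    ring
  have e3 : star (tens (bb84 3) (bb84 3)) ⬝ᵥ B.mulVec (bb84 3)
      = r * r * r * (x1 - x2 - x3 + x4 - x5 + x6 + x7 - x8) := by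
    simp [bb84, tens, dotProduct, Matrix.mulVec, Fintype.sum_prod_type, Fin.sum_univ_two,
      Complex.star_def, map_inv₀, Complex.conj_ofReal, hrdef,
      x1, x2, x3, x4, x5, x6, x7, x8]
    ring
  have hRHS : (∑ p : Fin 2 × Fin 2, ∑ t : Fin 2, Complex.normSq (B p t))
      = Complex.normSq x1 + Complex.normSq x2 + Complex.normSq x3 + Complex.normSq x4
        + Complex.normSq x5 + Complex.normSq x6 + Complex.normSq x7 + Complex.normSq x8 := by
    simp [Fintype.sum_prod_type, Fin.sum_univ_two, x1, x2, x3, x4, x5, x6, x7, x8]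
    ring
  rw [Fin.sum_univ_four, e0, e1, e2, e3, hRHS]
  set u := x1 + x4 + x6 + x7 with hu
  set v := x2 + x3 + x5 + x8 with hv
  have hS : x1 + x2 + x3 + x4 + x5 + x6 + x7 + x8 = u + v := by rw [hu, hv]; ring
  have hT : x1 - x2 - x3 + x4 - x5 + x6 + x7 - x8 = u - v := by rw [hu, hv]; ring
  rw [hS, hT]
  have hr3 : ∀ z : ℂ, Complex.normSq (r * r * r * z) = (1/8) * Complex.normSq z := by
    intro z
    rw [_root_.map_mul, _root_.map_mul, _root_.map_mul, hrdef, normSq_rt2]; ring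
  rw [hr3, hr3]
  have hpar := para u v
  have h1 := block x1 x4 x6 x7
  have h2 := block x8 x2 x3 x5
  have huu : x1 + x4 + x6 + x7 = u := hu.symm
  have hvv : x8 + x2 + x3 + x5 = v := by rw [hv]; ring
  rw [huu] at h1
  rw [hvv] at h2
  linarith

/-- For every quantum channel from qubits to two qubits (given by Kraus operators
`A i` with `∑ i, (A i)ᴴ * A i = 1`), the average cloning success probability over the
four BB84 states, namely `(1/4) ∑ k ⟨ψ_k ⊗ ψ_k| Φ(|ψ_k⟩⟨ψ_k|) |ψ_k ⊗ ψ_k⟩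
= (1/4) ∑ k ∑ i |⟨ψ_k ⊗ ψ_k| A i |ψ_k⟩|²`, is at most `3/4`. -/
theorem wiesner_single_qubit_counterfeit_bound {ι : Type} [Fintype ι]
    (A : ι → Matrix (Fin 2 × Fin 2) (Fin 2) ℂ)
    (hA : ∑ i, (A i)ᴴ * A i = 1) :
    (1 / 4 : ℝ) * ∑ k : Fin 4, ∑ i,
        Complex.normSq (star (tens (bb84 k) (bb84 k)) ⬝ᵥ (A i).mulVec (bb84 k))
      ≤ 3 / 4 := by
  have htr : ∀ t : Fin 2, (∑ i, ∑ p : Fin 2 × Fin 2, Complex.normSq (A i p t)) = 1 := by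
    intro t
    have h0 : (∑ i, (A i)ᴴ * A i) t t = (1 : Matrix (Fin 2) (Fin 2) ℂ) t t := by rw [hA]
    rw [Matrix.one_apply_eq] at h0
    simp only [Matrix.sum_apply, Matrix.mul_apply, Matrix.conjTranspose_apply] at h0
    have h1 : (∑ i, ∑ p : Fin 2 × Fin 2, (Complex.normSq (A i p t) : ℂ)) = 1 := by
      rw [← h0]
      refine Finset.sum_congr rfl fun i _ => Finset.sum_congr rfl fun p _ => ?_
      rw [Complex.star_def, mul_comm, Complex.mul_conj]
    exact_mod_cast h1
  have htot : (∑ i, ∑ p : Fin 2 × Fin 2, ∑ t : Fin 2, Complex.normSq (A i p t)) = 2 := by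
    have step1 : (∑ i, ∑ p : Fin 2 × Fin 2, ∑ t : Fin 2, Complex.normSq (A i p t))
        = ∑ i, ∑ t : Fin 2, ∑ p : Fin 2 × Fin 2, Complex.normSq (A i p t) :=
      Finset.sum_congr rfl fun i _ =>
        Finset.sum_comm (f := fun p t => Complex.normSq (A i p t))
    have step2 : (∑ i, ∑ t : Fin 2, ∑ p : Fin 2 × Fin 2, Complex.normSq (A i p t))
        = ∑ t : Fin 2, ∑ i, ∑ p : Fin 2 × Fin 2, Complex.normSq (A i p t) :=
      Finset.sum_comm (f := fun i t => ∑ p : Fin 2 × Fin 2, Complex.normSq (A i p t))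
    rw [step1, step2, Fin.sum_univ_two, htr, htr]; norm_num
  have hmain : (∑ i, ∑ k : Fin 4,
      Complex.normSq (star (tens (bb84 k) (bb84 k)) ⬝ᵥ (A i).mulVec (bb84 k))) ≤ 3 := by
    calc (∑ i, ∑ k : Fin 4,
        Complex.normSq (star (tens (bb84 k) (bb84 k)) ⬝ᵥ (A i).mulVec (bb84 k)))
        ≤ ∑ i, (3/2) * ∑ p : Fin 2 × Fin 2, ∑ t : Fin 2, Complex.normSq (A i p t) :=
          Finset.sum_le_sum fun i _ => key (A i)
      _ = (3/2) * ∑ i, ∑ p : Fin 2 × Fin 2, ∑ t : Fin 2, Complex.normSq (A i p t) := by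
          rw [Finset.mul_sum]
      _ = 3 := by rw [htot]; norm_num
  rw [Finset.sum_comm] at hmain
  linarith
end

section
/- Fix n ≥ 1. For k ∈ {1,2,3,4}^n let |Ψ_k⟩ = |ψ_{k_1}⟩ ⊗ ⋯ ⊗ |ψ_{k_n}⟩ ∈ (ℂ²)^{⊗n} be the tensor product of BB84 states. For every quantum channel Φ from 2^n × 2^n complex matrices to 4^n × 4^n complex matrices (given by Kraus operators A_i with Σ_i A_i*A_i = I), the average cloning success probability 4^{−n} Σ_{k ∈ {1,2,3,4}^n} ⟨Ψ_k ⊗ Ψ_k| Φ(|Ψ_k⟩⟨Ψ_k|) |Ψ_k ⊗ Ψ_k⟩ is at most (3/4)^n. -/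
open Matrix

/-- For a key `k : Fin n → Fin 4`, the product BB84 state
`|Ψ_k⟩ = |ψ_{k 1}⟩ ⊗ ⋯ ⊗ |ψ_{k n}⟩` in `(ℂ²)^{⊗n}`,
the latter identified with functions `(Fin n → Fin 2) → ℂ`. -/
noncomputable def bb84Prod (n : ℕ) (k : Fin n → Fin 4) : (Fin n → Fin 2) → ℂ :=
  fun x => ∏ i, bb84 (k i) (x i)

/-- Tensor product of two `n`-qubit vectors. -/
def tensN (n : ℕ) (u v : (Fin n → Fin 2) → ℂ) :
    (Fin n → Fin 2) × (Fin n → Fin 2) → ℂ := fun p => u p.1 * v p.2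

/-- A family of 12 vectors in `ℂ² ⊗ ℂ² ⊗ ℂ²` whose rank-one projectors sum to
`(3/2)·I₈`; the first four are the `ψ_j ⊗ ψ_j ⊗ ψ_j` for the BB84 states. -/
noncomputable def hVec : Fin 12 → Fin 2 → Fin 2 → Fin 2 → ℂ :=
  ![fun a b c => bb84 0 a * bb84 0 b * bb84 0 c,
    fun a b c => bb84 1 a * bb84 1 b * bb84 1 c,
    fun a b c => bb84 2 a * bb84 2 b * bb84 2 c,
    fun a b c => bb84 3 a * bb84 3 b * bb84 3 c,
    ![![![(1:ℂ)/2, 0], ![0, -(1/2)]], ![![0, -(1/2)], ![-(1/2), 0]]],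
    ![![![(0:ℂ), 0], ![0, (Real.sqrt 2 : ℂ)⁻¹]], ![![0, -(Real.sqrt 2 : ℂ)⁻¹], ![0, 0]]],
    ![![![(0:ℂ), 0], ![0, (Real.sqrt 2 : ℂ)⁻¹]], ![![0, 0], ![-(Real.sqrt 2 : ℂ)⁻¹, 0]]],
    ![![![(0:ℂ), 0], ![0, 0]], ![![0, (Real.sqrt 2 : ℂ)⁻¹], ![-(Real.sqrt 2 : ℂ)⁻¹, 0]]],
    ![![![(0:ℂ), -(1/2)], ![-(1/2), 0]], ![![-(1/2), 0], ![0, 1/2]]],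
    ![![![(0:ℂ), (Real.sqrt 2 : ℂ)⁻¹], ![-(Real.sqrt 2 : ℂ)⁻¹, 0]], ![![0, 0], ![0, 0]]],
    ![![![(0:ℂ), (Real.sqrt 2 : ℂ)⁻¹], ![0, 0]], ![![-(Real.sqrt 2 : ℂ)⁻¹, 0], ![0, 0]]],
    ![![![(0:ℂ), 0], ![(Real.sqrt 2 : ℂ)⁻¹, 0]], ![![-(Real.sqrt 2 : ℂ)⁻¹, 0], ![0, 0]]]]

lemma sqrt2_sq : ((Real.sqrt 2 : ℂ))⁻¹ * (Real.sqrt 2 : ℂ)⁻¹ = 2⁻¹ := by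
  rw [← mul_inv, ← Complex.ofReal_mul, Real.mul_self_sqrt (by norm_num)]
  norm_num

lemma hs2 : ((Real.sqrt 2:ℝ):ℂ) ^ 2 = 2 := by
  rw [sq, ← Complex.ofReal_mul, Real.mul_self_sqrt (by norm_num)]; norm_num

lemma hs6 : ((Real.sqrt 2:ℝ):ℂ) ^ 6 = 8 := by
  have : ((Real.sqrt 2:ℝ):ℂ) ^ 6 = (((Real.sqrt 2:ℝ):ℂ)^2)^3 := by ring
  rw [this, hs2]; norm_num

lemma hr2 : ((Real.sqrt 2:ℝ):ℂ)⁻¹ ^ 2 = 1/2 := by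
  rw [sq, sqrt2_sq]; norm_num

lemma hr6 : ((Real.sqrt 2:ℝ):ℂ)⁻¹ ^ 6 = 1/8 := by
  have : ((Real.sqrt 2:ℝ):ℂ)⁻¹ ^ 6 = ((Real.sqrt 2:ℝ):ℂ)⁻¹^2 * ((Real.sqrt 2:ℝ):ℂ)⁻¹^2 * ((Real.sqrt 2:ℝ):ℂ)⁻¹^2 := by ring
  rw [this, hr2]; norm_num

set_option maxHeartbeats 3200000 in
/-- The key single-qutrit (3-qubit) computation: the 12 vectors `hVec j`
form a `(3/2)`-tight frame of `ℂ⁸`. -/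
lemma hVec_orth (a b c a' b' c' : Fin 2) :
    ∑ j : Fin 12, hVec j a b c * hVec j a' b' c' =
      if a = a' ∧ b = b' ∧ c = c' then (3/2 : ℂ) else 0 := by
  fin_cases a <;> fin_cases b <;> fin_cases c <;> fin_cases a' <;> fin_cases b' <;> fin_cases c' <;>
    · simp only [Fin.sum_univ_succ, Finset.univ_eq_empty, Finset.sum_empty, hVec, bb84,
        Matrix.cons_val_zero, Matrix.cons_val_succ, Matrix.cons_val_one, Matrix.head_cons,
        Fin.mk_zero, Fin.mk_one]
      try ring_nf
      try norm_num [hr2, hr6, hs2, hs6]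

set_option maxHeartbeats 1600000 in
lemma hVec_real (j : Fin 12) (a b c : Fin 2) :
    (starRingEnd ℂ) (hVec j a b c) = hVec j a b c := by
  revert j
  simp only [Fin.forall_fin_succ, IsEmpty.forall_iff, and_true]
  fin_cases a <;> fin_cases b <;> fin_cases c <;>
    simp [hVec, bb84, Matrix.cons_val_zero, Matrix.cons_val_succ, Matrix.cons_val_one,
      Matrix.head_cons, Complex.conj_ofReal, map_inv₀, map_neg, map_div₀, map_ofNat,
      _root_.map_one, _root_.map_mul, Matrix.vecHead, Matrix.vecTail, Function.comp]

lemma bb84_real (j : Fin 4) (t : Fin 2) :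
    (starRingEnd ℂ) (bb84 j t) = bb84 j t := by
  fin_cases j <;> fin_cases t <;>
    simp [bb84, Complex.conj_ofReal, map_inv₀]

/-- Embedding of keys into the index set of the extended family. -/
def emb (n : ℕ) : (Fin n → Fin 4) → (Fin n → Fin 12) :=
  fun k j => Fin.castLE (by norm_num) (k j)

lemma hVec_cast (j : Fin 4) (a b c : Fin 2) :
    hVec (Fin.castLE (by norm_num) j) a b c = bb84 j a * bb84 j b * bb84 j c := by
  fin_cases j <;> rfl

lemma hsum (n : ℕ) (q q' : ((Fin n → Fin 2) × (Fin n → Fin 2)) × (Fin n → Fin 2)) :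
    ∑ f : Fin n → Fin 12,
        (∏ j, hVec (f j) (q.1.1 j) (q.1.2 j) (q.2 j)) *
          ∏ j, hVec (f j) (q'.1.1 j) (q'.1.2 j) (q'.2 j)
      = if q = q' then ((3:ℂ)/2)^n else 0 := by
  have h1 : ∀ f : Fin n → Fin 12,
      (∏ j, hVec (f j) (q.1.1 j) (q.1.2 j) (q.2 j)) *
          ∏ j, hVec (f j) (q'.1.1 j) (q'.1.2 j) (q'.2 j)
        = ∏ j, (hVec (f j) (q.1.1 j) (q.1.2 j) (q.2 j) *
            hVec (f j) (q'.1.1 j) (q'.1.2 j) (q'.2 j)) :=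
    fun f => Finset.prod_mul_distrib.symm
  simp only [h1]
  have hps := Finset.prod_univ_sum (fun _ : Fin n => (Finset.univ : Finset (Fin 12)))
    (fun j m => hVec m (q.1.1 j) (q.1.2 j) (q.2 j) * hVec m (q'.1.1 j) (q'.1.2 j) (q'.2 j))
  rw [Fintype.piFinset_univ] at hps
  rw [← hps]
  have h2 : ∀ j : Fin n, (∑ m : Fin 12, hVec m (q.1.1 j) (q.1.2 j) (q.2 j) *
      hVec m (q'.1.1 j) (q'.1.2 j) (q'.2 j))
      = if q.1.1 j = q'.1.1 j ∧ q.1.2 j = q'.1.2 j ∧ q.2 j = q'.2 j then (3/2 : ℂ) else 0 :=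
    fun j => hVec_orth _ _ _ _ _ _
  rw [Finset.prod_congr rfl fun j _ => h2 j]
  by_cases h : q = q'
  · subst h
    simp [Finset.prod_const, Finset.card_univ, div_pow]
  · have hex : ∃ j : Fin n, ¬(q.1.1 j = q'.1.1 j ∧ q.1.2 j = q'.1.2 j ∧ q.2 j = q'.2 j) := by
      by_contra hc
      push_neg at hc
      apply h
      obtain ⟨⟨a1, a2⟩, a3⟩ := q
      obtain ⟨⟨b1, b2⟩, b3⟩ := q'
      simp only [Prod.mk.injEq]
      exact ⟨⟨funext fun j => (hc j).1, funext fun j => (hc j).2.1⟩,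
        funext fun j => (hc j).2.2⟩
    obtain ⟨j, hj⟩ := hex
    rw [Finset.prod_eq_zero (Finset.mem_univ j) (by simp [hj]), if_neg h]

lemma parseval (n : ℕ) {ι : Type} [Fintype ι]
    (A : ι → Matrix ((Fin n → Fin 2) × (Fin n → Fin 2)) (Fin n → Fin 2) ℂ) (i : ι) :
    ∑ f : Fin n → Fin 12,
        (Complex.normSq (∑ q : ((Fin n → Fin 2) × (Fin n → Fin 2)) × (Fin n → Fin 2),
          (∏ j, hVec (f j) (q.1.1 j) (q.1.2 j) (q.2 j)) * A i q.1 q.2) : ℝ)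
      = (3/2 : ℝ)^n * ∑ q : ((Fin n → Fin 2) × (Fin n → Fin 2)) × (Fin n → Fin 2),
          Complex.normSq (A i q.1 q.2) := by
  apply Complex.ofReal_injective
  push_cast
  have key : ∀ f : Fin n → Fin 12,
      (Complex.normSq (∑ q : ((Fin n → Fin 2) × (Fin n → Fin 2)) × (Fin n → Fin 2),
          (∏ j, hVec (f j) (q.1.1 j) (q.1.2 j) (q.2 j)) * A i q.1 q.2) : ℂ)
      = ∑ q : ((Fin n → Fin 2) × (Fin n → Fin 2)) × (Fin n → Fin 2),
          ∑ q' : ((Fin n → Fin 2) × (Fin n → Fin 2)) × (Fin n → Fin 2),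
          ((starRingEnd ℂ) (A i q.1 q.2) * A i q'.1 q'.2) *
            ((∏ j, hVec (f j) (q.1.1 j) (q.1.2 j) (q.2 j)) *
              ∏ j, hVec (f j) (q'.1.1 j) (q'.1.2 j) (q'.2 j)) := by
    intro f
    rw [Complex.normSq_eq_conj_mul_self, map_sum, Finset.sum_mul_sum]
    refine Finset.sum_congr rfl fun q _ => Finset.sum_congr rfl fun q' _ => ?_
    rw [_root_.map_mul, map_prod]
    simp only [hVec_real]
    ring
  rw [Finset.sum_congr rfl fun f _ => key f]
  rw [Finset.sum_comm]
  have hq1 : ∀ q : ((Fin n → Fin 2) × (Fin n → Fin 2)) × (Fin n → Fin 2),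
      ∑ f : Fin n → Fin 12,
        ∑ q' : ((Fin n → Fin 2) × (Fin n → Fin 2)) × (Fin n → Fin 2),
          ((starRingEnd ℂ) (A i q.1 q.2) * A i q'.1 q'.2) *
            ((∏ j, hVec (f j) (q.1.1 j) (q.1.2 j) (q.2 j)) *
              ∏ j, hVec (f j) (q'.1.1 j) (q'.1.2 j) (q'.2 j))
      = ∑ q' : ((Fin n → Fin 2) × (Fin n → Fin 2)) × (Fin n → Fin 2),
          ((starRingEnd ℂ) (A i q.1 q.2) * A i q'.1 q'.2) *
            (if q = q' then ((3:ℂ)/2)^n else 0) := by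
    intro q
    rw [Finset.sum_comm]
    refine Finset.sum_congr rfl fun q' _ => ?_
    rw [← Finset.mul_sum, hsum]
  rw [Finset.sum_congr rfl fun q _ => hq1 q]
  have hq : ∀ q : ((Fin n → Fin 2) × (Fin n → Fin 2)) × (Fin n → Fin 2),
        ∑ q' : ((Fin n → Fin 2) × (Fin n → Fin 2)) × (Fin n → Fin 2),
          ((starRingEnd ℂ) (A i q.1 q.2) * A i q'.1 q'.2) *
            (if q = q' then ((3:ℂ)/2)^n else 0)
        = ((3:ℂ)/2)^n * (Complex.normSq (A i q.1 q.2) : ℂ) := by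
    intro q
    rw [Finset.sum_eq_single q]
    · rw [if_pos rfl, Complex.normSq_eq_conj_mul_self]; ring
    · intro b _ hb
      rw [if_neg (fun h => hb h.symm), mul_zero]
    · intro h; exact absurd (Finset.mem_univ q) h
  rw [Finset.sum_congr rfl fun q _ => hq q, ← Finset.mul_sum]

lemma trace_sum (n : ℕ) {ι : Type} [Fintype ι]
    (A : ι → Matrix ((Fin n → Fin 2) × (Fin n → Fin 2)) (Fin n → Fin 2) ℂ)
    (hA : ∑ i, (A i)ᴴ * A i = 1) :
    ∑ i, ∑ q : ((Fin n → Fin 2) × (Fin n → Fin 2)) × (Fin n → Fin 2),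
        Complex.normSq (A i q.1 q.2) = (2:ℝ)^n := by
  apply Complex.ofReal_injective
  push_cast
  have h1 : ∀ x : Fin n → Fin 2,
      ∑ i, ∑ p : (Fin n → Fin 2) × (Fin n → Fin 2),
        (Complex.normSq (A i p x) : ℂ) = 1 := by
    intro x
    have h2 : (∑ i, (A i)ᴴ * A i) x x = (1 : Matrix (Fin n → Fin 2) (Fin n → Fin 2) ℂ) x x := by
      rw [hA]
    rw [Matrix.sum_apply, Matrix.one_apply_eq] at h2
    rw [← h2]
    refine Finset.sum_congr rfl fun i _ => ?_
    rw [Matrix.mul_apply]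
    refine Finset.sum_congr rfl fun p _ => ?_
    rw [Matrix.conjTranspose_apply, Complex.normSq_eq_conj_mul_self]
    rfl
  calc ∑ i, ∑ q : ((Fin n → Fin 2) × (Fin n → Fin 2)) × (Fin n → Fin 2),
        (Complex.normSq (A i q.1 q.2) : ℂ)
      = ∑ i, ∑ p : (Fin n → Fin 2) × (Fin n → Fin 2), ∑ x : Fin n → Fin 2,
          (Complex.normSq (A i p x) : ℂ) := by
        exact Finset.sum_congr rfl fun i _ => Fintype.sum_prod_type _
    _ = ∑ i, ∑ x : Fin n → Fin 2, ∑ p : (Fin n → Fin 2) × (Fin n → Fin 2),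
          (Complex.normSq (A i p x) : ℂ) :=
        Finset.sum_congr rfl fun i _ => Finset.sum_comm
    _ = ∑ x : Fin n → Fin 2, ∑ i, ∑ p : (Fin n → Fin 2) × (Fin n → Fin 2),
          (Complex.normSq (A i p x) : ℂ) := Finset.sum_comm
    _ = ∑ _x : Fin n → Fin 2, (1:ℂ) := Finset.sum_congr rfl fun x _ => h1 x
    _ = (2:ℂ)^n := by
        simp [Finset.card_univ]

/-- For every quantum channel from `n` qubits to `2n` qubits (given by Kraus operators
`A i` with `∑ i, (A i)ᴴ * A i = 1`), the average cloning success probability over the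
`4^n` product BB84 states, namely `4^{-n} ∑ k ⟨Ψ_k ⊗ Ψ_k| Φ(|Ψ_k⟩⟨Ψ_k|) |Ψ_k ⊗ Ψ_k⟩
= 4^{-n} ∑ k ∑ i |⟨Ψ_k ⊗ Ψ_k| A i |Ψ_k⟩|²`, is at most `(3/4)^n`. -/
theorem wiesner_counterfeit_bound (n : ℕ) (hn : 1 ≤ n) {ι : Type} [Fintype ι]
    (A : ι → Matrix ((Fin n → Fin 2) × (Fin n → Fin 2)) (Fin n → Fin 2) ℂ)
    (hA : ∑ i, (A i)ᴴ * A i = 1) :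
    ((4 : ℝ) ^ n)⁻¹ * ∑ k : Fin n → Fin 4, ∑ i,
        Complex.normSq
          (star (tensN n (bb84Prod n k) (bb84Prod n k)) ⬝ᵥ (A i).mulVec (bb84Prod n k))
      ≤ (3 / 4 : ℝ) ^ n := by
  classical
  have hdot : ∀ (k : Fin n → Fin 4) (i : ι),
      star (tensN n (bb84Prod n k) (bb84Prod n k)) ⬝ᵥ (A i).mulVec (bb84Prod n k)
        = ∑ q : ((Fin n → Fin 2) × (Fin n → Fin 2)) × (Fin n → Fin 2),
            (∏ j, hVec (emb n k j) (q.1.1 j) (q.1.2 j) (q.2 j)) * A i q.1 q.2 := by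
    intro k i
    rw [Fintype.sum_prod_type]
    simp only [dotProduct, Matrix.mulVec, Pi.star_apply, tensN, bb84Prod, emb]
    refine Finset.sum_congr rfl fun p _ => ?_
    have hstar : (star ((∏ j, bb84 (k j) (p.1 j)) * ∏ j, bb84 (k j) (p.2 j)) : ℂ)
        = (∏ j, bb84 (k j) (p.1 j)) * ∏ j, bb84 (k j) (p.2 j) := by
      rw [show (star ((∏ j, bb84 (k j) (p.1 j)) * ∏ j, bb84 (k j) (p.2 j)) : ℂ)
          = (starRingEnd ℂ) ((∏ j, bb84 (k j) (p.1 j)) * ∏ j, bb84 (k j) (p.2 j)) from rfl,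
        _root_.map_mul, map_prod, map_prod]
      simp only [bb84_real]
    rw [hstar, Finset.mul_sum]
    refine Finset.sum_congr rfl fun x _ => ?_
    simp only [hVec_cast]
    rw [Finset.prod_mul_distrib, Finset.prod_mul_distrib]
    ring
  have key : ∑ k : Fin n → Fin 4, ∑ i, Complex.normSq
        (star (tensN n (bb84Prod n k) (bb84Prod n k)) ⬝ᵥ (A i).mulVec (bb84Prod n k))
      ≤ (3/2:ℝ)^n * (2:ℝ)^n := by
    set F : (Fin n → Fin 12) → ℝ := fun f => ∑ i, Complex.normSq
      (∑ q : ((Fin n → Fin 2) × (Fin n → Fin 2)) × (Fin n → Fin 2),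
        (∏ j, hVec (f j) (q.1.1 j) (q.1.2 j) (q.2 j)) * A i q.1 q.2) with hF
    have e_inj : ∀ x ∈ Finset.univ, ∀ y ∈ Finset.univ, emb n x = emb n y → x = y := by
      intro x _ y _ h
      funext j
      exact Fin.castLE_injective _ (congrFun h j)
    calc ∑ k : Fin n → Fin 4, ∑ i, Complex.normSq
          (star (tensN n (bb84Prod n k) (bb84Prod n k)) ⬝ᵥ (A i).mulVec (bb84Prod n k))
        = ∑ k : Fin n → Fin 4, F (emb n k) := by
          refine Finset.sum_congr rfl fun k _ => Finset.sum_congr rfl fun i _ => ?_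
          rw [hdot k i]
      _ = ∑ f ∈ Finset.image (emb n) Finset.univ, F f := (Finset.sum_image e_inj).symm
      _ ≤ ∑ f : Fin n → Fin 12, F f :=
          Finset.sum_le_sum_of_subset_of_nonneg (Finset.subset_univ _)
            (fun f _ _ => Finset.sum_nonneg fun i _ => Complex.normSq_nonneg _)
      _ = ∑ i, ∑ f : Fin n → Fin 12, Complex.normSq
            (∑ q : ((Fin n → Fin 2) × (Fin n → Fin 2)) × (Fin n → Fin 2),
              (∏ j, hVec (f j) (q.1.1 j) (q.1.2 j) (q.2 j)) * A i q.1 q.2) := Finset.sum_comm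
      _ = ∑ i, (3/2:ℝ)^n * ∑ q : ((Fin n → Fin 2) × (Fin n → Fin 2)) × (Fin n → Fin 2),
            Complex.normSq (A i q.1 q.2) :=
          Finset.sum_congr rfl fun i _ => parseval n A i
      _ = (3/2:ℝ)^n * ∑ i, ∑ q : ((Fin n → Fin 2) × (Fin n → Fin 2)) × (Fin n → Fin 2),
            Complex.normSq (A i q.1 q.2) := (Finset.mul_sum _ _ _).symm
      _ = (3/2:ℝ)^n * (2:ℝ)^n := by rw [trace_sum n A hA]
  have h4 : (0:ℝ) ≤ ((4:ℝ)^n)⁻¹ := by positivity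
  calc ((4 : ℝ) ^ n)⁻¹ * ∑ k : Fin n → Fin 4, ∑ i, Complex.normSq
        (star (tensN n (bb84Prod n k) (bb84Prod n k)) ⬝ᵥ (A i).mulVec (bb84Prod n k))
      ≤ ((4:ℝ)^n)⁻¹ * ((3/2:ℝ)^n * (2:ℝ)^n) := mul_le_mul_of_nonneg_left key h4
    _ = (3/4:ℝ)^n := by
        rw [← mul_pow, ← inv_pow, ← mul_pow]
        norm_num
end

section
/- Let A_0 = (1/√12)·[[3,0],[0,1],[0,1],[1,0]] and A_1 = (1/√12)·[[0,1],[1,0],[1,0],[0,3]] be 4×2 complex matrices. Then A_0*A_0 + A_1*A_1 = I_2 (so ρ ↦ A_0 ρ A_0* + A_1 ρ A_1* is a quantum channel), and for each of the four BB84 states |ψ_k⟩ it holds that ⟨ψ_k ⊗ ψ_k| (A_0 |ψ_k⟩⟨ψ_k| A_0* + A_1 |ψ_k⟩⟨ψ_k| A_1*) |ψ_k ⊗ ψ_k⟩ = 3/4, where ℂ⁴ is identified with ℂ²⊗ℂ². Consequently the average cloning success probability of this channel over the four BB84 states is exactly 3/4. -/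
open Matrix

/-- Tensor product `u ⊗ v ∈ ℂ⁴` of two qubit vectors, with respect to the basis
ordering `|00⟩, |01⟩, |10⟩, |11⟩`. -/
def tens4 (u v : Fin 2 → ℂ) : Fin 4 → ℂ :=
  ![u 0 * v 0, u 0 * v 1, u 1 * v 0, u 1 * v 1]

/-- The first Kraus operator of the optimal cloner for Wiesner's scheme. -/
noncomputable def A₀ : Matrix (Fin 4) (Fin 2) ℂ :=
  (Real.sqrt 12 : ℂ)⁻¹ • !![3, 0; 0, 1; 0, 1; 1, 0]

/-- The second Kraus operator of the optimal cloner for Wiesner's scheme. -/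
noncomputable def A₁ : Matrix (Fin 4) (Fin 2) ℂ :=
  (Real.sqrt 12 : ℂ)⁻¹ • !![0, 1; 1, 0; 1, 0; 0, 3]

lemma s12 : ((Real.sqrt 12 : ℂ))⁻¹ ^ 2 = 1/12 := by
  rw [sq, ← mul_inv, ← Complex.ofReal_mul, Real.mul_self_sqrt (by norm_num)]
  norm_num
lemma st12 : star ((Real.sqrt 12 : ℂ))⁻¹ = ((Real.sqrt 12 : ℂ))⁻¹ := by
  rw [← Complex.ofReal_inv]; exact Complex.conj_ofReal _
lemma s2 : ((Real.sqrt 2 : ℂ))⁻¹ ^ 2 = 1/2 := by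
  rw [sq, ← mul_inv, ← Complex.ofReal_mul, Real.mul_self_sqrt (by norm_num)]
  norm_num
lemma st2 : star ((Real.sqrt 2 : ℂ))⁻¹ = ((Real.sqrt 2 : ℂ))⁻¹ := by
  rw [← Complex.ofReal_inv]; exact Complex.conj_ofReal _
lemma s2e : ((Real.sqrt 2 : ℂ))⁻¹ ^ 4 = 1/4 := by
  rw [show (4:ℕ) = 2*2 from rfl, pow_mul, s2]; norm_num
lemma s2o : ((Real.sqrt 2 : ℂ))⁻¹ ^ 3 = (1/2) * ((Real.sqrt 2 : ℂ))⁻¹ := by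
  rw [pow_succ, s2]
lemma r12 : ((Real.sqrt 12 : ℂ)) ^ 2 = 12 := by
  rw [sq, ← Complex.ofReal_mul, Real.mul_self_sqrt (by norm_num)]; norm_num
lemma r2 : ((Real.sqrt 2 : ℂ)) ^ 2 = 2 := by
  rw [sq, ← Complex.ofReal_mul, Real.mul_self_sqrt (by norm_num)]; norm_num
lemma r26 : ((Real.sqrt 2 : ℂ)) ^ 6 = 8 := by
  rw [show ((Real.sqrt 2 : ℂ)) ^ 6 = (((Real.sqrt 2 : ℂ)) ^ 2) ^ 3 by ring, r2]; norm_num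
lemma s2o6 : ((Real.sqrt 2 : ℂ))⁻¹ ^ 6 = 1/8 := by
  rw [show ((Real.sqrt 2 : ℂ))⁻¹ ^ 6 = (((Real.sqrt 2 : ℂ))⁻¹ ^ 2) ^ 3 by ring, s2]; norm_num

set_option maxHeartbeats 2000000 in
lemma wiesner_key : ∀ k : Fin 4,
      star (tens4 (bb84 k) (bb84 k)) ⬝ᵥ
        (A₀ * vecMulVec (bb84 k) (star (bb84 k)) * A₀ᴴ +
         A₁ * vecMulVec (bb84 k) (star (bb84 k)) * A₁ᴴ).mulVec
        (tens4 (bb84 k) (bb84 k)) = (3 / 4 : ℂ) := by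
  intro k
  fin_cases k <;>
  · simp [bb84, tens4, A₀, A₁, Matrix.mul_apply, Matrix.mulVec, Matrix.vecMul,
      dotProduct, vecMulVec_apply, conjTranspose_apply, Fin.sum_univ_succ, st12, st2,
      Pi.star_apply, Complex.conj_ofNat, -cons_vecMulVec]
    ring_nf
    norm_num [s12, s2, s2e, s2o, s2o6, r12, r2, r26]

/-- The map `ρ ↦ A₀ ρ A₀* + A₁ ρ A₁*` is a quantum channel (the Kraus operators satisfy
`A₀*A₀ + A₁*A₁ = I`), and it clones each of the four BB84 states with success
probability exactly `3/4`; consequently its average success probability is `3/4`. -/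
theorem wiesner_optimal_cloner :
    A₀ᴴ * A₀ + A₁ᴴ * A₁ = 1 ∧
    (∀ k : Fin 4,
      star (tens4 (bb84 k) (bb84 k)) ⬝ᵥ
        (A₀ * vecMulVec (bb84 k) (star (bb84 k)) * A₀ᴴ +
         A₁ * vecMulVec (bb84 k) (star (bb84 k)) * A₁ᴴ).mulVec
        (tens4 (bb84 k) (bb84 k)) = (3 / 4 : ℂ)) ∧
    (1 / 4 : ℂ) * ∑ k : Fin 4,
      star (tens4 (bb84 k) (bb84 k)) ⬝ᵥ
        (A₀ * vecMulVec (bb84 k) (star (bb84 k)) * A₀ᴴ +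
         A₁ * vecMulVec (bb84 k) (star (bb84 k)) * A₁ᴴ).mulVec
        (tens4 (bb84 k) (bb84 k)) = (3 / 4 : ℂ) := by
  refine ⟨?_, wiesner_key, ?_⟩
  · ext i j
    fin_cases i <;> fin_cases j <;>
      simp [A₀, A₁, Matrix.mul_apply, conjTranspose_apply, Fin.sum_univ_succ,
        Matrix.one_apply, st12, Complex.conj_ofNat] <;>
      ring_nf <;> norm_num [s12, r12]
  · norm_num [Fin.sum_univ_succ, wiesner_key]
end

section
/- For every finite ensemble {(p_k, |ψ_k⟩)}_{k=1}^{N} of unit vectors |ψ_k⟩ ∈ ℂ² with probabilities p_k ≥ 0 summing to 1, there exists a quantum channel Φ from 2×2 complex matrices to 4×4 complex matrices (given by Kraus operators A_i with Σ_i A_i*A_i = I) whose average cloning success probability Σ_k p_k ⟨ψ_k ⊗ ψ_k| Φ(|ψ_k⟩⟨ψ_k|) |ψ_k ⊗ ψ_k⟩ is at least 2/3. Hence no single-qubit quantum money scheme has optimal simple counterfeiting probability below 2/3. -/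
open Matrix

/-- The cloning amplitude `√(2/3)`. -/
noncomputable def sAmp : ℝ := Real.sqrt (2/3)

lemma sAmp_mul : (sAmp : ℂ) * (sAmp : ℂ) = 2/3 := by
  rw [← Complex.ofReal_mul, sAmp, Real.mul_self_sqrt (by norm_num)]
  norm_num

lemma sAmp_normSq : Complex.normSq (sAmp : ℂ) = 2/3 := by
  rw [Complex.normSq_ofReal, sAmp, Real.mul_self_sqrt (by norm_num)]

/-- Kraus operators of the optimal symmetric cloner. -/
noncomputable def Acl (i : Fin 2) : Matrix (Fin 2 × Fin 2) (Fin 2) ℂ :=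
  fun q j => (((sAmp / 2) *
    ((if q.1 = j ∧ q.2 = i then 1 else 0) + (if q.1 = i ∧ q.2 = j then 1 else 0)) : ℝ) : ℂ)

lemma Acl_tp : ∑ i, (Acl i)ᴴ * Acl i = 1 := by
  ext j j'
  fin_cases j <;> fin_cases j' <;>
    simp [Acl, Matrix.mul_apply, Matrix.one_apply, Fin.sum_univ_two,
      Fintype.sum_prod_type, Matrix.conjTranspose_apply] <;>
    linear_combination (3/2 : ℂ) * sAmp_mul

/-- For every finite ensemble `{(p_k, |ψ_k⟩)}` of single-qubit unit vectors with
probabilities summing to 1, there is a quantum channel from qubits to two qubits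
(given by Kraus operators `A i` with `∑ i, (A i)ᴴ * A i = 1`) whose average cloning
success probability `∑ k p_k ⟨ψ_k ⊗ ψ_k| Φ(|ψ_k⟩⟨ψ_k|) |ψ_k ⊗ ψ_k⟩
= ∑ k p_k ∑ i |⟨ψ_k ⊗ ψ_k| A i |ψ_k⟩|²` is at least `2/3`. Hence no single-qubit
quantum money scheme has optimal simple counterfeiting probability below `2/3`. -/
theorem qubit_scheme_counterfeit_lower_bound (N : ℕ) (p : Fin N → ℝ)
    (ψ : Fin N → (Fin 2 → ℂ)) (hp : ∀ k, 0 ≤ p k) (hp1 : ∑ k, p k = 1)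
    (hψ : ∀ k, star (ψ k) ⬝ᵥ ψ k = 1) :
    ∃ (m : ℕ) (A : Fin m → Matrix (Fin 2 × Fin 2) (Fin 2) ℂ),
      (∑ i, (A i)ᴴ * A i = 1) ∧
      (2 / 3 : ℝ) ≤ ∑ k, p k * ∑ i,
        Complex.normSq (star (tens (ψ k) (ψ k)) ⬝ᵥ (A i).mulVec (ψ k)) := by
  refine ⟨2, Acl, Acl_tp, ?_⟩
  have key : ∀ k, (∑ i, Complex.normSq (star (tens (ψ k) (ψ k)) ⬝ᵥ (Acl i).mulVec (ψ k)))
      = 2/3 := by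
    intro k
    set x := ψ k 0 with hx
    set y := ψ k 1 with hy
    have hψk : starRingEnd ℂ x * x + starRingEnd ℂ y * y = 1 := by
      simpa [dotProduct, Fin.sum_univ_two, hx, hy] using hψ k
    have e0 : star (tens (ψ k) (ψ k)) ⬝ᵥ (Acl 0).mulVec (ψ k)
        = (sAmp : ℂ) * starRingEnd ℂ x := by
      simp [tens, dotProduct, Matrix.mulVec, Acl, Fintype.sum_prod_type,
        Fin.sum_univ_two, hx, hy]
      ring_nf
      linear_combination ((sAmp : ℂ) * starRingEnd ℂ x) * hψk
    have e1 : star (tens (ψ k) (ψ k)) ⬝ᵥ (Acl 1).mulVec (ψ k)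
        = (sAmp : ℂ) * starRingEnd ℂ y := by
      simp [tens, dotProduct, Matrix.mulVec, Acl, Fintype.sum_prod_type,
        Fin.sum_univ_two, hx, hy]
      ring_nf
      linear_combination ((sAmp : ℂ) * starRingEnd ℂ y) * hψk
    have hsum : Complex.normSq x + Complex.normSq y = 1 := by
      have h2 : ((Complex.normSq x + Complex.normSq y : ℝ) : ℂ) = 1 := by
        push_cast
        rw [Complex.normSq_eq_conj_mul_self, Complex.normSq_eq_conj_mul_self]
        exact hψk
      exact_mod_cast h2
    rw [Fin.sum_univ_two, e0, e1, Complex.normSq_mul, Complex.normSq_mul,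
      Complex.normSq_conj, Complex.normSq_conj, sAmp_normSq]
    linarith
  calc (2/3 : ℝ) = ∑ k, p k * (2/3) := by rw [← Finset.sum_mul, hp1]; ring
    _ ≤ _ := le_of_eq (Finset.sum_congr rfl fun k _ => by rw [key k])
end

section
/- Let Q_1 be a positive semidefinite matrix indexed by (Y_1 × Z_1) × X_1 and Q_2 a positive semidefinite matrix indexed by (Y_2 × Z_2) × X_2 (finite index sets), viewed as operators on the corresponding tensor product spaces. For a positive semidefinite Q on (Y×Z)⊗X define v(Q) = sup { Tr(QX) : X positive semidefinite on (Y×Z)⊗X, Tr_{Y×Z}(X) = I_X }, where Tr_{Y×Z} is the partial trace onto the X-factor. Then the SDP value of the combined problem satisfies v(Q_1 ⊗ Q_2) = v(Q_1) · v(Q_2), where Q_1 ⊗ Q_2 is viewed as an operator on ((Y_1×Y_2)×(Z_1×Z_2)) ⊗ (X_1×X_2) after the natural reordering of tensor factors, and the partial trace in the combined constraint is over (Y_1×Y_2)×(Z_1×Z_2). -/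
set_option linter.unusedSectionVars false


open Matrix
open scoped ComplexOrder Kronecker

/-- The partial trace onto the second (`X`) factor: `(Tr_W M)(x,x') = ∑ w M[(w,x),(w,x')]`. -/
noncomputable def ptraceW {W X : Type} [Fintype W] (M : Matrix (W × X) (W × X) ℂ) : Matrix X X ℂ :=
  Matrix.of fun x x' => ∑ w, M (w, x) (w, x')

/-- The value of the counterfeiting SDP associated with a positive semidefinite
objective operator `Q` on `(Y×Z)⊗X`:
`v(Q) = sup { Tr(QM) : M ⪰ 0, Tr_{Y×Z}(M) = I_X }`. -/
noncomputable def sdpValue {W X : Type} [Fintype W] [Fintype X] [DecidableEq X]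
    (Q : Matrix (W × X) (W × X) ℂ) : ℝ :=
  sSup {r | ∃ M : Matrix (W × X) (W × X) ℂ,
    M.PosSemidef ∧ ptraceW M = 1 ∧ ((Q * M).trace).re = r}

namespace Matrix

open scoped MatrixOrder in
noncomputable def PosSemidef.sqrt {n : Type} [Fintype n] [DecidableEq n] {A : Matrix n n ℂ}
    (_hA : A.PosSemidef) : Matrix n n ℂ := CFC.sqrt A

open scoped MatrixOrder in
theorem PosSemidef.posSemidef_sqrt {n : Type} [Fintype n] [DecidableEq n] {A : Matrix n n ℂ}
    (hA : A.PosSemidef) : hA.sqrt.PosSemidef :=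
  Matrix.nonneg_iff_posSemidef.mp (CFC.sqrt_nonneg A)

open scoped MatrixOrder in
theorem PosSemidef.sqrt_mul_self {n : Type} [Fintype n] [DecidableEq n] {A : Matrix n n ℂ}
    (hA : A.PosSemidef) : hA.sqrt * hA.sqrt = A :=
  CFC.sqrt_mul_sqrt_self A (Matrix.nonneg_iff_posSemidef.mpr hA)

theorem posSemidef_iff_eq_transpose_mul_self {n : Type} [Fintype n] {A : Matrix n n ℂ} :
    A.PosSemidef ↔ ∃ B : Matrix n n ℂ, A = Bᴴ * B := by
  classical
  constructor
  · intro hA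
    refine ⟨hA.sqrt, ?_⟩
    rw [hA.posSemidef_sqrt.isHermitian.eq, hA.sqrt_mul_self]
  · rintro ⟨B, rfl⟩
    exact posSemidef_conjTranspose_mul_self B

end Matrix

namespace SdpAux

variable {W X : Type} [Fintype W] [Fintype X]

def sdpSet {X : Type} [Fintype W] [Fintype X] [DecidableEq X] (Q : Matrix (W × X) (W × X) ℂ) : Set ℝ :=
  {r | ∃ M : Matrix (W × X) (W × X) ℂ,
    M.PosSemidef ∧ ptraceW M = 1 ∧ ((Q * M).trace).re = r}

lemma sdpValue_eq {X : Type} [Fintype X] [DecidableEq X] (Q : Matrix (W × X) (W × X) ℂ) :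
    sdpValue Q = sSup (sdpSet Q) := rfl

lemma ptraceW_apply (M : Matrix (W × X) (W × X) ℂ) (x x' : X) :
    ptraceW M x x' = ∑ w, M (w, x) (w, x') := rfl

lemma ptraceW_add (M N : Matrix (W × X) (W × X) ℂ) :
    ptraceW (M + N) = ptraceW M + ptraceW N := by
  ext x x'; simp [ptraceW, Finset.sum_add_distrib]

lemma ptraceW_smul (c : ℂ) (M : Matrix (W × X) (W × X) ℂ) :
    ptraceW (c • M) = c • ptraceW M := by
  ext x x'; simp [ptraceW, Finset.mul_sum]

lemma trace_ptraceW (M : Matrix (W × X) (W × X) ℂ) : (ptraceW M).trace = M.trace := by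
  simp only [Matrix.trace, Matrix.diag, ptraceW, Matrix.of_apply, Fintype.sum_prod_type]
  rw [Finset.sum_comm]

lemma ptraceW_posSemidef [DecidableEq X] {M : Matrix (W × X) (W × X) ℂ} (hM : M.PosSemidef) :
    (ptraceW M).PosSemidef := by
  obtain ⟨B, rfl⟩ := posSemidef_iff_eq_transpose_mul_self.mp hM
  have h : ptraceW (Bᴴ * B) =
      (Matrix.of (fun (kw : (W × X) × W) (x : X) => B kw.1 (kw.2, x)))ᴴ *
      (Matrix.of (fun (kw : (W × X) × W) (x : X) => B kw.1 (kw.2, x))) := by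
    ext x x'
    simp only [ptraceW, Matrix.of_apply, Matrix.mul_apply, Matrix.conjTranspose_apply,
      Fintype.sum_prod_type]
    rw [Finset.sum_comm]
    refine Finset.sum_congr rfl fun a _ => ?_
    rw [Finset.sum_comm]
  rw [h]
  exact posSemidef_conjTranspose_mul_self _

lemma kron_conjTranspose {m n : Type} (A : Matrix m m ℂ) (B : Matrix n n ℂ) :
    (A ⊗ₖ B)ᴴ = Aᴴ ⊗ₖ Bᴴ := by
  ext ⟨i, j⟩ ⟨k, l⟩
  simp [Matrix.conjTranspose_apply, mul_comm]

lemma kron_posSemidef {m n : Type} [Fintype m] [Fintype n] {A : Matrix m m ℂ} {B : Matrix n n ℂ}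
    (hA : A.PosSemidef) (hB : B.PosSemidef) : (A ⊗ₖ B).PosSemidef := by
  obtain ⟨C, rfl⟩ := posSemidef_iff_eq_transpose_mul_self.mp hA
  obtain ⟨D, rfl⟩ := posSemidef_iff_eq_transpose_mul_self.mp hB
  exact posSemidef_iff_eq_transpose_mul_self.mpr
    ⟨C ⊗ₖ D, by rw [kron_conjTranspose, ← Matrix.mul_kronecker_mul]⟩

lemma smul_posSemidef {m : Type} [Fintype m] {A : Matrix m m ℂ} (hA : A.PosSemidef)
    {r : ℝ} (hr : 0 ≤ r) : ((r : ℂ) • A).PosSemidef := by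
  obtain ⟨B, rfl⟩ := posSemidef_iff_eq_transpose_mul_self.mp hA
  refine posSemidef_iff_eq_transpose_mul_self.mpr ⟨((Real.sqrt r : ℂ)) • B, ?_⟩
  rw [conjTranspose_smul, Matrix.smul_mul, Matrix.mul_smul, smul_smul]
  congr 1
  rw [Complex.star_def, Complex.conj_ofReal, ← Complex.ofReal_mul, Real.mul_self_sqrt hr]

lemma trace_psd_nonneg {m : Type} [Fintype m] {A : Matrix m m ℂ} (hA : A.PosSemidef) :
    0 ≤ A.trace := by
  obtain ⟨B, rfl⟩ := posSemidef_iff_eq_transpose_mul_self.mp hA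
  refine Finset.sum_nonneg fun i _ => ?_
  simp only [Matrix.diag, Matrix.mul_apply, Matrix.conjTranspose_apply]
  exact Finset.sum_nonneg fun k _ => star_mul_self_nonneg _

lemma trace_mul_psd_nonneg {m : Type} [Fintype m] {Q M : Matrix m m ℂ}
    (hQ : Q.PosSemidef) (hM : M.PosSemidef) : 0 ≤ (Q * M).trace := by
  obtain ⟨B, rfl⟩ := posSemidef_iff_eq_transpose_mul_self.mp hM
  have h1 : (Q * (Bᴴ * B)).trace = (B * Q * Bᴴ).trace := by
    rw [Matrix.trace_mul_cycle B Q Bᴴ, Matrix.trace_mul_comm, Matrix.mul_assoc]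
  rw [h1]
  exact trace_psd_nonneg (hQ.mul_mul_conjTranspose_same B)

lemma ptraceW_kron [DecidableEq X] (A : Matrix W W ℂ) (B : Matrix X X ℂ) :
    ptraceW (A ⊗ₖ B) = A.trace • B := by
  ext x x'
  simp [ptraceW, Matrix.trace, Matrix.diag, Finset.sum_mul]

lemma ptraceW_one [DecidableEq W] [DecidableEq X] :
    ptraceW (1 : Matrix (W × X) (W × X) ℂ) = (Fintype.card W : ℂ) • 1 := by
  rw [← Matrix.one_kronecker_one (α := ℂ) (m := W) (n := X), ptraceW_kron, Matrix.trace_one]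

lemma trace_one_kron_mul [DecidableEq W] (A : Matrix X X ℂ) (S : Matrix (W × X) (W × X) ℂ) :
    (((1 : Matrix W W ℂ) ⊗ₖ A) * S).trace = (A * ptraceW S).trace := by
  calc (((1 : Matrix W W ℂ) ⊗ₖ A) * S).trace
      = ∑ w : W, ∑ x : X, ∑ w' : W, ∑ x' : X,
          (if w = w' then A x x' * S (w', x') (w, x) else 0) := by
        simp [Matrix.trace, Matrix.diag, Matrix.mul_apply, Fintype.sum_prod_type,
          Matrix.one_apply, ite_mul]
    _ = ∑ w : W, ∑ x : X, ∑ x' : X, A x x' * S (w, x') (w, x) := by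
        refine Finset.sum_congr rfl fun w _ => Finset.sum_congr rfl fun x _ => ?_
        rw [Finset.sum_comm]
        refine Finset.sum_congr rfl fun x' _ => ?_
        simp
    _ = (A * ptraceW S).trace := by
        simp only [Matrix.trace, Matrix.diag, Matrix.mul_apply, ptraceW, Matrix.of_apply,
          Finset.mul_sum]
        rw [Finset.sum_comm]
        refine Finset.sum_congr rfl fun x _ => ?_
        rw [Finset.sum_comm]

end SdpAux

lemma psd_diag {m : Type} [Fintype m] {M : Matrix m m ℂ} (hM : M.PosSemidef) (i : m) :
    0 ≤ M i i := by
  obtain ⟨B, rfl⟩ := posSemidef_iff_eq_transpose_mul_self.mp hM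
  rw [Matrix.mul_apply]
  exact Finset.sum_nonneg fun k _ => by
    rw [Matrix.conjTranspose_apply]; exact star_mul_self_nonneg _

lemma psd_abs_entry_le_one {m : Type} [Fintype m] {M : Matrix m m ℂ} (hM : M.PosSemidef)
    (hdiag : ∀ i, (M i i).re ≤ 1) (i j : m) : ‖M i j‖ ≤ 1 := by
  obtain ⟨B, hB⟩ := posSemidef_iff_eq_transpose_mul_self.mp hM
  have hdd : ∀ i : m, ∑ k, ‖B k i‖ ^ 2 = (M i i).re := by
    intro i
    rw [hB, Matrix.mul_apply]
    rw [Complex.re_sum]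
    refine Finset.sum_congr rfl fun k _ => ?_
    rw [Matrix.conjTranspose_apply, Complex.sq_norm]
    rw [show star (B k i) * B k i = ((starRingEnd ℂ) (B k i)) * B k i from rfl,
      ← Complex.normSq_eq_conj_mul_self]
    simp
  have h1 : ‖M i j‖ ≤ ∑ k, ‖B k i‖ * ‖B k j‖ := by
    rw [hB, Matrix.mul_apply]
    refine le_trans (norm_sum_le _ _) (le_of_eq ?_)
    refine Finset.sum_congr rfl fun k _ => ?_
    rw [Matrix.conjTranspose_apply, norm_mul]
    congr 1
    exact norm_star _
  have h2 : (∑ k, ‖B k i‖ * ‖B k j‖) ^ 2 ≤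
      (∑ k, ‖B k i‖ ^ 2) * (∑ k, ‖B k j‖ ^ 2) :=
    Finset.sum_mul_sq_le_sq_mul_sq _ _ _
  have h3 : 0 ≤ ∑ k, ‖B k i‖ * ‖B k j‖ :=
    Finset.sum_nonneg fun k _ => mul_nonneg (norm_nonneg _) (norm_nonneg _)
  nlinarith [hdd i, hdd j, hdiag i, hdiag j, norm_nonneg (M i j),
    (psd_diag hM i), (psd_diag hM j), Complex.nonneg_iff.mp (psd_diag hM i),
    Complex.nonneg_iff.mp (psd_diag hM j)]

namespace SdpAux2
open SdpAux

variable {W X : Type} [Fintype W] [Fintype X] [DecidableEq X]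

lemma feasible_diag_le_one {M : Matrix (W × X) (W × X) ℂ} (hM : M.PosSemidef)
    (h1 : ptraceW M = 1) (p : W × X) : (M p p).re ≤ 1 := by
  have hx : (ptraceW M) p.2 p.2 = 1 := by rw [h1, Matrix.one_apply_eq]
  have hsum : ∑ w, (M (w, p.2) (w, p.2)).re = 1 := by
    have := congr_arg Complex.re hx
    rw [ptraceW_apply, Complex.re_sum] at this
    simpa using this
  have hnn : ∀ w : W, 0 ≤ (M (w, p.2) (w, p.2)).re :=
    fun w => (Complex.nonneg_iff.mp (psd_diag hM (w, p.2))).1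
  calc (M p p).re = (M (p.1, p.2) (p.1, p.2)).re := by rw [Prod.mk.eta]
    _ ≤ ∑ w, (M (w, p.2) (w, p.2)).re :=
        Finset.single_le_sum (fun w _ => hnn w) (Finset.mem_univ p.1)
    _ = 1 := hsum

lemma mem_sdpSet_le (Q : Matrix (W × X) (W × X) ℂ) {r : ℝ} (hr : r ∈ sdpSet Q) :
    r ≤ ∑ i : W × X, ∑ j : W × X, ‖Q i j‖ := by
  obtain ⟨M, hM, h1, rfl⟩ := hr
  have hMij : ∀ i j, ‖M i j‖ ≤ 1 :=
    psd_abs_entry_le_one hM (fun i => feasible_diag_le_one hM h1 i)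
  calc ((Q * M).trace).re ≤ ‖(Q * M).trace‖ := Complex.re_le_norm _
    _ ≤ ∑ i, ‖(Q * M) i i‖ := by
        unfold Matrix.trace; exact norm_sum_le _ _
    _ ≤ ∑ i : W × X, ∑ j : W × X, ‖Q i j‖ := by
        refine Finset.sum_le_sum fun i _ => ?_
        rw [Matrix.mul_apply]
        refine le_trans (norm_sum_le _ _) ?_
        refine Finset.sum_le_sum fun j _ => ?_
        rw [norm_mul]
        calc ‖Q i j‖ * ‖M j i‖
            ≤ ‖Q i j‖ * 1 := by
              exact mul_le_mul_of_nonneg_left (hMij j i) (norm_nonneg _)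
          _ = ‖Q i j‖ := mul_one _

lemma bddAbove_sdpSet (Q : Matrix (W × X) (W × X) ℂ) : BddAbove (sdpSet Q) :=
  ⟨_, fun _ hr => mem_sdpSet_le Q hr⟩

lemma sdpSet_mem_nonneg {Q : Matrix (W × X) (W × X) ℂ} (hQ : Q.PosSemidef) {r : ℝ}
    (hr : r ∈ sdpSet Q) : 0 ≤ r := by
  obtain ⟨M, hM, _, rfl⟩ := hr
  exact (Complex.nonneg_iff.mp (trace_mul_psd_nonneg hQ hM)).1

lemma sdpValue_nonneg {Q : Matrix (W × X) (W × X) ℂ} (hQ : Q.PosSemidef) :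
    0 ≤ sdpValue Q := by
  rw [sdpValue_eq]
  exact Real.sSup_nonneg (fun r hr => sdpSet_mem_nonneg hQ hr)

lemma trace_mul_im_zero {m : Type} [Fintype m] {Q M : Matrix m m ℂ} (hQ : Q.PosSemidef)
    (hM : M.PosSemidef) : ((Q * M).trace).im = 0 :=
  ((Complex.nonneg_iff.mp (trace_mul_psd_nonneg hQ hM)).2).symm

lemma psd_trace_zero {m : Type} [Fintype m] {M : Matrix m m ℂ} (hM : M.PosSemidef)
    (h : M.trace = 0) : M = 0 := by
  obtain ⟨B, rfl⟩ := posSemidef_iff_eq_transpose_mul_self.mp hM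
  have hsum : ∑ i, ∑ k, Complex.normSq (B k i) = 0 := by
    have := congr_arg Complex.re h
    rw [Matrix.trace, Complex.re_sum, Complex.zero_re] at this
    rw [← this]
    refine Finset.sum_congr rfl fun i _ => ?_
    rw [Matrix.diag, Matrix.mul_apply, Complex.re_sum]
    refine Finset.sum_congr rfl fun k _ => ?_
    rw [Matrix.conjTranspose_apply]
    simp [Complex.normSq_apply, Complex.mul_re]
  have hB : B = 0 := by
    ext k i
    have h1 : ∀ i ∈ Finset.univ (α := m), 0 ≤ ∑ k, Complex.normSq (B k i) :=
      fun i _ => Finset.sum_nonneg fun k _ => Complex.normSq_nonneg _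
    have h2 := (Finset.sum_eq_zero_iff_of_nonneg h1).mp hsum i (Finset.mem_univ i)
    have h3 := (Finset.sum_eq_zero_iff_of_nonneg
      (fun k _ => Complex.normSq_nonneg (B k i))).mp h2 k (Finset.mem_univ k)
    simpa using Complex.normSq_eq_zero.mp h3
  rw [hB]; simp

-- feasible point
lemma exists_feasible [DecidableEq W] [Nonempty W] (Q : Matrix (W × X) (W × X) ℂ) :
    (sdpSet Q).Nonempty := by
  set M₀ : Matrix (W × X) (W × X) ℂ := (Complex.ofReal ((Fintype.card W : ℝ)⁻¹)) • 1 with hM₀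
  have hcard : (Fintype.card W : ℝ) ≠ 0 := by
    simp [Fintype.card_ne_zero]
  refine ⟨((Q * M₀).trace).re, M₀, ?_, ?_, rfl⟩
  · rw [hM₀]
    exact smul_posSemidef (Matrix.PosSemidef.one (n := W × X) (R := ℂ))
      (r := (Fintype.card W : ℝ)⁻¹) (inv_nonneg.mpr (Nat.cast_nonneg _))
  · rw [hM₀, ptraceW_smul, ptraceW_one, smul_smul]
    rw [show (Complex.ofReal ((Fintype.card W : ℝ)⁻¹)) * (Fintype.card W : ℂ) = 1 by
      rw [show ((Fintype.card W : ℕ) : ℂ) = Complex.ofReal (Fintype.card W : ℝ) by push_cast; rfl,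
        ← Complex.ofReal_mul, inv_mul_cancel₀ hcard, Complex.ofReal_one]]
    simp

end SdpAux2

namespace SdpCore
open SdpAux SdpAux2

def phi {W₁ X₁ W₂ X₂ : Type} : ((W₁ × W₂) × (X₁ × X₂)) ≃ ((W₁ × X₁) × (W₂ × X₂)) where
  toFun p := ((p.1.1, p.2.1), (p.1.2, p.2.2))
  invFun q := ((q.1.1, q.2.1), (q.1.2, q.2.2))
  left_inv p := rfl
  right_inv q := rfl

lemma trace_submatrix_equiv {m' m : Type} [Fintype m'] [Fintype m] (e : m' ≃ m)
    (A : Matrix m m ℂ) : (A.submatrix e e).trace = A.trace :=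
  Fintype.sum_equiv e _ _ (fun i => rfl)

variable {W₁ X₁ W₂ X₂ : Type} [Fintype W₁] [Fintype X₁] [Fintype W₂] [Fintype X₂]
  [DecidableEq X₁] [DecidableEq X₂]

lemma ptraceW_kron_submatrix_phi (M₁ : Matrix (W₁ × X₁) (W₁ × X₁) ℂ)
    (M₂ : Matrix (W₂ × X₂) (W₂ × X₂) ℂ) :
    ptraceW ((M₁ ⊗ₖ M₂).submatrix phi phi) = ptraceW M₁ ⊗ₖ ptraceW M₂ := by
  ext ⟨x₁, x₂⟩ ⟨x₁', x₂'⟩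
  simp only [ptraceW, Matrix.of_apply, Matrix.submatrix_apply, Matrix.kroneckerMap_apply,
    Fintype.sum_prod_type, phi, Equiv.coe_fn_mk]
  rw [← Finset.sum_mul_sum]

lemma sum_comm3 {a1 a2 a3 : Type} [Fintype a1] [Fintype a2] [Fintype a3]
    (f : a1 → a2 → a3 → ℂ) :
    ∑ a, ∑ b, ∑ c, f a b c = ∑ c, ∑ a, ∑ b, f a b c := by
  rw [show (∑ a, ∑ b, ∑ c, f a b c) = ∑ a, ∑ c, ∑ b, f a b c from
    Finset.sum_congr rfl fun _ _ => Finset.sum_comm]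
  exact Finset.sum_comm

lemma sum_comm4 {a1 a2 a3 a4 : Type} [Fintype a1] [Fintype a2] [Fintype a3] [Fintype a4]
    (f : a1 → a2 → a3 → a4 → ℂ) :
    ∑ a, ∑ b, ∑ c, ∑ d, f a b c d = ∑ d, ∑ a, ∑ b, ∑ c, f a b c d := by
  rw [show (∑ a, ∑ b, ∑ c, ∑ d, f a b c d) = ∑ a, ∑ d, ∑ b, ∑ c, f a b c d from
    Finset.sum_congr rfl fun a _ => sum_comm3 _]
  exact Finset.sum_comm

lemma sum_comm5 {a1 a2 a3 a4 a5 : Type} [Fintype a1] [Fintype a2] [Fintype a3] [Fintype a4]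
    [Fintype a5] (f : a1 → a2 → a3 → a4 → a5 → ℂ) :
    ∑ a, ∑ b, ∑ c, ∑ d, ∑ e, f a b c d e = ∑ e, ∑ a, ∑ b, ∑ c, ∑ d, f a b c d e := by
  rw [show (∑ a, ∑ b, ∑ c, ∑ d, ∑ e, f a b c d e)
      = ∑ a, ∑ e, ∑ b, ∑ c, ∑ d, f a b c d e from
    Finset.sum_congr rfl fun a _ => sum_comm4 _]
  exact Finset.sum_comm

noncomputable def compress {A C D : Type} [Fintype A] [Fintype C] [Fintype D]
    (S : Matrix (A × (C × D)) (A × (C × D)) ℂ) (u : D → ℂ) : Matrix A A ℂ :=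
  Matrix.of fun a b => ∑ c : C, ∑ d : D, ∑ d' : D,
    (starRingEnd ℂ) (u d) * S (a, (c, d)) (b, (c, d')) * u d'

lemma compress_posSemidef {A C D : Type} [Fintype A] [Fintype C] [Fintype D]
    {S : Matrix (A × (C × D)) (A × (C × D)) ℂ} (hS : S.PosSemidef) (u : D → ℂ) :
    (compress S u).PosSemidef := by
  obtain ⟨E, rfl⟩ := posSemidef_iff_eq_transpose_mul_self.mp hS
  set F : Matrix ((A × (C × D)) × C) A ℂ :=
    Matrix.of fun kc a => ∑ d, E kc.1 (a, (kc.2, d)) * u d with hF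
  have h : compress (Eᴴ * E) u = Fᴴ * F := by
    ext a b
    have hL : compress (Eᴴ * E) u a b
        = ∑ c : C, ∑ d : D, ∑ d' : D, ∑ k : A × C × D,
            (starRingEnd ℂ) (u d) * (star (E k (a, (c, d))) * E k (b, (c, d'))) * u d' := by
      simp only [compress, Matrix.of_apply, Matrix.mul_apply, Matrix.conjTranspose_apply,
        Finset.sum_mul, Finset.mul_sum]
    have hR : (Fᴴ * F) a b
        = ∑ k : A × C × D, ∑ c : C, ∑ d : D, ∑ d' : D,
            (starRingEnd ℂ) (u d) * (star (E k (a, (c, d))) * E k (b, (c, d'))) * u d' := by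
      rw [Matrix.mul_apply, Fintype.sum_prod_type]
      refine Finset.sum_congr rfl fun k _ => Finset.sum_congr rfl fun c _ => ?_
      rw [Matrix.conjTranspose_apply, hF]
      simp only [Matrix.of_apply]
      rw [star_sum, Finset.sum_mul_sum]
      refine Finset.sum_congr rfl fun d _ => Finset.sum_congr rfl fun d' _ => ?_
      rw [star_mul', starRingEnd_apply]
      ring
    rw [hL, hR, sum_comm4]
  rw [h]
  exact posSemidef_conjTranspose_mul_self F

section Main
variable (M' : Matrix ((W₁ × X₁) × (W₂ × X₂)) ((W₁ × X₁) × (W₂ × X₂)) ℂ)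

lemma compress_ptrace (u : X₂ → ℂ)
    (hpt : ∀ (x₁ : X₁) (x₂ : X₂) (x₁' : X₁) (x₂' : X₂),
      (∑ w₁ : W₁, ∑ w₂ : W₂, M' ((w₁, x₁), (w₂, x₂)) ((w₁, x₁'), (w₂, x₂')))
        = if ((x₁, x₂) : X₁ × X₂) = (x₁', x₂') then 1 else 0) :
    ptraceW (compress M' u) = (star u ⬝ᵥ u) • (1 : Matrix X₁ X₁ ℂ) := by
  ext x₁ x₁'
  have h1 : ptraceW (compress M' u) x₁ x₁'
      = ∑ w₁ : W₁, ∑ w₂ : W₂, ∑ d : X₂, ∑ d' : X₂,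
          (starRingEnd ℂ) (u d) * M' ((w₁, x₁), (w₂, d)) ((w₁, x₁'), (w₂, d')) * u d' := by
    simp only [ptraceW, compress, Matrix.of_apply]
  rw [h1, sum_comm4, sum_comm4]
  have h2 : ∀ d d' : X₂,
      (∑ w₁ : W₁, ∑ w₂ : W₂,
        (starRingEnd ℂ) (u d) * M' ((w₁, x₁), (w₂, d)) ((w₁, x₁'), (w₂, d')) * u d')
      = (starRingEnd ℂ) (u d) * (if ((x₁, d) : X₁ × X₂) = (x₁', d') then 1 else 0) * u d' := by
    intro d d'
    rw [← hpt x₁ d x₁' d']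
    simp only [Finset.mul_sum, Finset.sum_mul]
  rw [Finset.sum_congr rfl fun d _ => Finset.sum_congr rfl fun d' _ => h2 d d']
  rw [Matrix.smul_apply, smul_eq_mul]
  by_cases hx : x₁ = x₁'
  · subst hx
    rw [Matrix.one_apply_eq, mul_one]
    have hite : ∀ d d' : X₂, ((starRingEnd ℂ) (u d) *
        (if ((x₁, d) : X₁ × X₂) = (x₁, d') then 1 else 0) * u d')
        = if d = d' then (starRingEnd ℂ) (u d) * u d' else 0 := by
      intro d d'
      by_cases hdd : d = d' <;> simp [hdd, Prod.ext_iff]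
    rw [Finset.sum_congr rfl fun d _ => Finset.sum_congr rfl fun d' _ => hite d d']
    rw [dotProduct]
    refine Finset.sum_congr rfl fun d _ => ?_
    rw [Finset.sum_ite_eq]
    simp only [Finset.mem_univ, if_true, starRingEnd_apply, Pi.star_apply]
  · have hite : ∀ d d' : X₂, ((starRingEnd ℂ) (u d) *
        (if ((x₁, d) : X₁ × X₂) = (x₁', d') then 1 else 0) * u d') = 0 := by
      intro d d'
      simp [Prod.ext_iff, hx]
    rw [Finset.sum_congr rfl fun d _ => Finset.sum_congr rfl fun d' _ => hite d d']
    simp [Matrix.one_apply, hx]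

variable [DecidableEq W₁] [DecidableEq W₂]

lemma R_apply (B : Matrix (W₁ × X₁) (W₁ × X₁) ℂ) (a b : W₁ × X₁) (p q : W₂ × X₂) :
    ((B ⊗ₖ (1 : Matrix (W₂ × X₂) (W₂ × X₂) ℂ)) * M' * (B ⊗ₖ (1 : Matrix (W₂ × X₂) (W₂ × X₂) ℂ)))
        (a, p) (b, q)
      = ∑ a' : W₁ × X₁, ∑ b' : W₁ × X₁, B a a' * M' (a', p) (b', q) * B b' b := by
  rw [Matrix.mul_assoc, Matrix.mul_apply, Fintype.sum_prod_type]
  refine Finset.sum_congr rfl fun a' _ => ?_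
  have hcol : ∀ p' : W₂ × X₂, (B ⊗ₖ (1 : Matrix (W₂ × X₂) (W₂ × X₂) ℂ)) (a, p) (a', p')
      * (M' * (B ⊗ₖ (1 : Matrix (W₂ × X₂) (W₂ × X₂) ℂ))) (a', p') (b, q)
      = if p = p' then B a a'
          * (M' * (B ⊗ₖ (1 : Matrix (W₂ × X₂) (W₂ × X₂) ℂ))) (a', p') (b, q) else 0 := by
    intro p'
    by_cases hpp : p = p' <;> simp [Matrix.one_apply, hpp]
  rw [Finset.sum_congr rfl fun p' _ => hcol p', Finset.sum_ite_eq, if_pos (Finset.mem_univ p)]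
  rw [Matrix.mul_apply, Fintype.sum_prod_type, Finset.mul_sum]
  refine Finset.sum_congr rfl fun b' _ => ?_
  have hcol2 : ∀ q' : W₂ × X₂,
      M' (a', p) (b', q') * (B ⊗ₖ (1 : Matrix (W₂ × X₂) (W₂ × X₂) ℂ)) (b', q') (b, q)
      = if q = q' then M' (a', p) (b', q') * B b' b else 0 := by
    intro q'
    by_cases hqq : q = q'
    · subst hqq; simp [Matrix.one_apply]
    · rw [if_neg hqq]
      have : (1 : Matrix (W₂ × X₂) (W₂ × X₂) ℂ) q' q = 0 :=
        Matrix.one_apply_ne (fun h => hqq h.symm)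
      simp [this]
  rw [Finset.sum_congr rfl fun q' _ => hcol2 q', Finset.sum_ite_eq,
    if_pos (Finset.mem_univ q)]
  ring

lemma key (B : Matrix (W₁ × X₁) (W₁ × X₁) ℂ) (Q₁ : Matrix (W₁ × X₁) (W₁ × X₁) ℂ)
    (hQ : B * B = Q₁) (u : X₂ → ℂ) :
    star u ⬝ᵥ (ptraceW (ptraceW
        ((B ⊗ₖ (1 : Matrix (W₂ × X₂) (W₂ × X₂) ℂ)) * M'
          * (B ⊗ₖ (1 : Matrix (W₂ × X₂) (W₂ × X₂) ℂ))))) *ᵥ u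
      = (Q₁ * compress M' u).trace := by
  have hL : star u ⬝ᵥ (ptraceW (ptraceW
        ((B ⊗ₖ (1 : Matrix (W₂ × X₂) (W₂ × X₂) ℂ)) * M'
          * (B ⊗ₖ (1 : Matrix (W₂ × X₂) (W₂ × X₂) ℂ))))) *ᵥ u
      = ∑ x₂ : X₂, ∑ x₂' : X₂, ∑ w₂ : W₂, ∑ a : W₁ × X₁, ∑ a' : W₁ × X₁, ∑ b' : W₁ × X₁,
          star (u x₂) * (B a a' * M' (a', (w₂, x₂)) (b', (w₂, x₂')) * B b' a) * u x₂' := by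
    simp only [dotProduct, Matrix.mulVec, ptraceW, Matrix.of_apply, R_apply,
      Pi.star_apply, Finset.sum_mul, Finset.mul_sum]
    refine Finset.sum_congr rfl fun x₂ _ => Finset.sum_congr rfl fun x₂' _ =>
      Finset.sum_congr rfl fun w₂ _ => Finset.sum_congr rfl fun a _ =>
      Finset.sum_congr rfl fun a' _ => Finset.sum_congr rfl fun b' _ => ?_
    ring
  rw [hL]
  have hcollapse : ∀ (x₂ x₂' : X₂) (w₂ : W₂),
      (∑ a : W₁ × X₁, ∑ a' : W₁ × X₁, ∑ b' : W₁ × X₁,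
        star (u x₂) * (B a a' * M' (a', (w₂, x₂)) (b', (w₂, x₂')) * B b' a) * u x₂')
      = ∑ a' : W₁ × X₁, ∑ b' : W₁ × X₁,
          star (u x₂) * M' (a', (w₂, x₂)) (b', (w₂, x₂')) * u x₂' * Q₁ b' a' := by
    intro x₂ x₂' w₂
    rw [show (∑ a : W₁ × X₁, ∑ a' : W₁ × X₁, ∑ b' : W₁ × X₁,
        star (u x₂) * (B a a' * M' (a', (w₂, x₂)) (b', (w₂, x₂')) * B b' a) * u x₂')
      = ∑ a' : W₁ × X₁, ∑ b' : W₁ × X₁, ∑ a : W₁ × X₁,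
        star (u x₂) * (B a a' * M' (a', (w₂, x₂)) (b', (w₂, x₂')) * B b' a) * u x₂' from
      (sum_comm3 _).symm]
    refine Finset.sum_congr rfl fun a' _ => Finset.sum_congr rfl fun b' _ => ?_
    rw [← hQ, Matrix.mul_apply, Finset.mul_sum]
    refine Finset.sum_congr rfl fun a _ => ?_
    ring
  rw [Finset.sum_congr rfl fun x₂ _ => Finset.sum_congr rfl fun x₂' _ =>
    Finset.sum_congr rfl fun w₂ _ => hcollapse x₂ x₂' w₂]
  have hR : (Q₁ * compress M' u).trace
      = ∑ b' : W₁ × X₁, ∑ a' : W₁ × X₁, ∑ w₂ : W₂, ∑ x₂ : X₂, ∑ x₂' : X₂,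
          star (u x₂) * M' (a', (w₂, x₂)) (b', (w₂, x₂')) * u x₂' * Q₁ b' a' := by
    simp only [Matrix.trace, Matrix.diag, Matrix.mul_apply, compress, Matrix.of_apply,
      Finset.mul_sum, starRingEnd_apply]
    refine Finset.sum_congr rfl fun b' _ => Finset.sum_congr rfl fun a' _ =>
      Finset.sum_congr rfl fun w₂ _ => Finset.sum_congr rfl fun x₂ _ =>
      Finset.sum_congr rfl fun x₂' _ => ?_
    ring
  rw [hR]
  rw [sum_comm5, sum_comm5, Finset.sum_comm]
  refine Finset.sum_congr rfl fun b' _ => Finset.sum_congr rfl fun a' _ => sum_comm3 _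

end Main

lemma sdpValue_empty {W X : Type} [Fintype W] [Fintype X] [DecidableEq X] [IsEmpty X]
    (Q : Matrix (W × X) (W × X) ℂ) : sdpValue Q = 0 := by
  rw [sdpValue_eq]
  have hset : sdpSet Q = {0} := by
    ext r
    constructor
    · rintro ⟨M, hM, h1, rfl⟩
      have : (Q * M).trace = 0 := by
        rw [Matrix.trace]
        rw [Finset.univ_eq_empty, Finset.sum_empty]
      simp [this]
    · rintro rfl
      refine ⟨0, Matrix.PosSemidef.zero, ?_, ?_⟩
      · ext x x'; exact (IsEmpty.false x).elim
      · rw [Matrix.mul_zero, Matrix.trace_zero]; rfl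
  rw [hset, csSup_singleton]

lemma sdpValue_emptyW {W X : Type} [Fintype W] [Fintype X] [DecidableEq X] [IsEmpty W]
    [Nonempty X] (Q : Matrix (W × X) (W × X) ℂ) : sdpValue Q = 0 := by
  rw [sdpValue_eq]
  have hset : sdpSet Q = ∅ := by
    ext r
    simp only [Set.mem_empty_iff_false, iff_false, sdpSet, Set.mem_setOf_eq]
    rintro ⟨M, hM, h1, rfl⟩
    obtain ⟨x⟩ := ‹Nonempty X›
    have h := congrFun (congrFun h1 x) x
    rw [ptraceW_apply, Finset.univ_eq_empty, Finset.sum_empty, Matrix.one_apply_eq] at h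
    exact zero_ne_one h
  rw [hset, Real.sSup_empty]

section Core
variable {W₁ X₁ W₂ X₂ : Type} [Fintype W₁] [Fintype X₁] [Fintype W₂] [Fintype X₂]
  [DecidableEq X₁] [DecidableEq X₂] [DecidableEq W₁] [DecidableEq W₂]

theorem sub_mult [Nonempty W₂] [Nonempty X₁] [Nonempty X₂]
    (Q₁ : Matrix (W₁ × X₁) (W₁ × X₁) ℂ) (Q₂ : Matrix (W₂ × X₂) (W₂ × X₂) ℂ)
    (hQ₁ : Q₁.PosSemidef) (hQ₂ : Q₂.PosSemidef)
    (Mc : Matrix ((W₁ × W₂) × (X₁ × X₂)) ((W₁ × W₂) × (X₁ × X₂)) ℂ)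
    (hMc : Mc.PosSemidef) (hpt1 : ptraceW Mc = 1) :
    ((((Q₁ ⊗ₖ Q₂).submatrix (phi (W₁ := W₁) (X₁ := X₁) (W₂ := W₂) (X₂ := X₂))
        (phi (W₁ := W₁) (X₁ := X₁) (W₂ := W₂) (X₂ := X₂))) * Mc).trace).re
      ≤ sdpValue Q₁ * sdpValue Q₂ := by
  have hv₁0 : 0 ≤ sdpValue Q₁ := sdpValue_nonneg hQ₁
  have hv₂0 : 0 ≤ sdpValue Q₂ := sdpValue_nonneg hQ₂
  set M' := Mc.submatrix (phi (W₁ := W₁) (X₁ := X₁) (W₂ := W₂) (X₂ := X₂)).symm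
      (phi (W₁ := W₁) (X₁ := X₁) (W₂ := W₂) (X₂ := X₂)).symm with hM'def
  have hM' : M'.PosSemidef := hMc.submatrix _
  have hMc_eq : Mc = M'.submatrix phi phi := by
    ext p q
    simp [hM'def, Matrix.submatrix_apply]
  have hpt : ∀ (x₁ : X₁) (x₂ : X₂) (x₁' : X₁) (x₂' : X₂),
      (∑ w₁ : W₁, ∑ w₂ : W₂, M' ((w₁, x₁), (w₂, x₂)) ((w₁, x₁'), (w₂, x₂')))
        = if ((x₁, x₂) : X₁ × X₂) = (x₁', x₂') then 1 else 0 := by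
    intro x₁ x₂ x₁' x₂'
    have h := congrFun (congrFun hpt1 (x₁, x₂)) (x₁', x₂')
    rw [ptraceW_apply, Fintype.sum_prod_type, Matrix.one_apply] at h
    exact h
  set B := hQ₁.sqrt with hBdef
  have hB2 : B * B = Q₁ := hQ₁.sqrt_mul_self
  have hBh : Bᴴ = B := hQ₁.posSemidef_sqrt.isHermitian
  set P := B ⊗ₖ (1 : Matrix (W₂ × X₂) (W₂ × X₂) ℂ) with hPdef
  have hPh : Pᴴ = P := by rw [hPdef, kron_conjTranspose, hBh, Matrix.conjTranspose_one]
  have hRpsd : (P * M' * P).PosSemidef := by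
    have h := hM'.conjTranspose_mul_mul_same P
    rwa [hPh] at h
  set N := ptraceW (P * M' * P) with hNdef
  have hN : N.PosSemidef := ptraceW_posSemidef hRpsd
  set sig := ptraceW N with hsigdef
  have hsigpsd : sig.PosSemidef := ptraceW_posSemidef hN
  -- claim A
  have htrace : ((((Q₁ ⊗ₖ Q₂).submatrix (phi (W₁ := W₁) (X₁ := X₁) (W₂ := W₂) (X₂ := X₂))
      (phi (W₁ := W₁) (X₁ := X₁) (W₂ := W₂) (X₂ := X₂))) * Mc).trace) = (Q₂ * N).trace := by
    rw [hMc_eq, Matrix.submatrix_mul_equiv, trace_submatrix_equiv]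
    have hfact : P * ((1 : Matrix (W₁ × X₁) (W₁ × X₁) ℂ) ⊗ₖ Q₂) * P = Q₁ ⊗ₖ Q₂ := by
      rw [hPdef, ← Matrix.mul_kronecker_mul, ← Matrix.mul_kronecker_mul]
      rw [Matrix.mul_one, Matrix.one_mul, Matrix.mul_one, hB2]
    rw [← hfact]
    have hc : (P * ((1 : Matrix (W₁ × X₁) (W₁ × X₁) ℂ) ⊗ₖ Q₂) * P * M').trace
        = (((1 : Matrix (W₁ × X₁) (W₁ × X₁) ℂ) ⊗ₖ Q₂) * (P * M' * P)).trace := by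
      rw [Matrix.mul_assoc (P * ((1 : Matrix (W₁ × X₁) (W₁ × X₁) ℂ) ⊗ₖ Q₂)) P M',
        Matrix.trace_mul_comm (P * ((1 : Matrix (W₁ × X₁) (W₁ × X₁) ℂ) ⊗ₖ Q₂)) (P * M')]
      rw [← Matrix.mul_assoc (P * M') P, Matrix.trace_mul_comm]
    rw [hc, trace_one_kron_mul, ← hNdef]
  rw [htrace]
  -- sigma dominance
  have hsigle : ((Complex.ofReal (sdpValue Q₁)) • (1 : Matrix X₂ X₂ ℂ) - sig).PosSemidef := by
    refine Matrix.posSemidef_iff_dotProduct_mulVec.mpr ⟨?_, ?_⟩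
    · refine Matrix.IsHermitian.sub ?_ hsigpsd.isHermitian
      rw [Matrix.IsHermitian, Matrix.conjTranspose_smul, Matrix.conjTranspose_one,
        Complex.star_def, Complex.conj_ofReal]
    · intro x
      have hform : star x ⬝ᵥ ((Complex.ofReal (sdpValue Q₁)) • (1 : Matrix X₂ X₂ ℂ) - sig) *ᵥ x
          = (Complex.ofReal (sdpValue Q₁)) * (star x ⬝ᵥ x) - star x ⬝ᵥ sig *ᵥ x := by
        rw [Matrix.sub_mulVec, dotProduct_sub]
        congr 1
        rw [Matrix.smul_mulVec, Matrix.one_mulVec, dotProduct_smul]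
        rfl
      rw [hform]
      have hkey := key M' B Q₁ hB2 x
      rw [← hPdef, ← hNdef, ← hsigdef] at hkey
      rw [hkey]
      have hCx : (compress M' x).PosSemidef := compress_posSemidef hM' x
      have ht0 : 0 ≤ (Q₁ * compress M' x).trace := trace_mul_psd_nonneg hQ₁ hCx
      obtain ⟨ht0re, ht0im⟩ := Complex.nonneg_iff.mp ht0
      have hptCx : ptraceW (compress M' x) = (star x ⬝ᵥ x) • 1 := compress_ptrace M' x hpt
      have hs0 : (0 : ℂ) ≤ star x ⬝ᵥ x := by
        rw [dotProduct]
        refine Finset.sum_nonneg fun d _ => ?_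
        simpa [Pi.star_apply] using star_mul_self_nonneg (x d)
      obtain ⟨hsre0, hsim0⟩ := Complex.nonneg_iff.mp hs0
      have hsreal : (star x ⬝ᵥ x) = Complex.ofReal ((star x ⬝ᵥ x).re) :=
        Complex.ext rfl hsim0.symm
      rcases eq_or_lt_of_le hsre0 with hsre | hsre
      · have hs_zero : (star x ⬝ᵥ x) = 0 := by
          rw [hsreal, ← hsre]; simp
        have hx0 : x = 0 := dotProduct_star_self_eq_zero.mp hs_zero
        have hcx0 : (Q₁ * compress M' x).trace = 0 := by
          have h0 : compress M' x = 0 := by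
            have htr : (compress M' x).trace = 0 := by
              rw [← trace_ptraceW, hptCx, hs_zero, zero_smul, Matrix.trace_zero]
            exact psd_trace_zero hCx htr
          rw [h0, Matrix.mul_zero, Matrix.trace_zero]
        rw [hcx0, hs_zero, mul_zero, sub_zero]
      · -- s.re > 0
        set t := (Q₁ * compress M' x).trace with htdef
        set sr := (star x ⬝ᵥ x).re with hsrdef
        have hfeas : ((Complex.ofReal sr⁻¹) • compress M' x).PosSemidef :=
          smul_posSemidef hCx (inv_nonneg.mpr (le_of_lt hsre))
        have hfeaspt : ptraceW ((Complex.ofReal sr⁻¹) • compress M' x) = 1 := by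
          rw [ptraceW_smul, hptCx, smul_smul]
          rw [show (Complex.ofReal sr⁻¹) * (star x ⬝ᵥ x) = 1 from by
            rw [hsreal, ← Complex.ofReal_mul, inv_mul_cancel₀ (ne_of_gt hsre),
              Complex.ofReal_one]]
          rw [one_smul]
        have hmem : ((Q₁ * ((Complex.ofReal sr⁻¹) • compress M' x)).trace).re ∈ sdpSet Q₁ :=
          ⟨_, hfeas, hfeaspt, rfl⟩
        have hle := le_csSup (bddAbove_sdpSet Q₁) hmem
        rw [← sdpValue_eq] at hle
        have hval : ((Q₁ * ((Complex.ofReal sr⁻¹) • compress M' x)).trace).re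
            = sr⁻¹ * t.re := by
          rw [Matrix.mul_smul, Matrix.trace_smul, ← htdef]
          exact Complex.re_ofReal_mul _ _
        rw [hval] at hle
        have htle : t.re ≤ sdpValue Q₁ * sr := by
          have h := mul_le_mul_of_nonneg_left hle (le_of_lt hsre)
          rw [← mul_assoc, mul_inv_cancel₀ (ne_of_gt hsre), one_mul] at h
          linarith
        refine Complex.nonneg_iff.mpr ⟨?_, ?_⟩
        · rw [Complex.sub_re, hsreal, ← Complex.ofReal_mul, Complex.ofReal_re]
          linarith [htle]
        · rw [Complex.sub_im, hsreal, ← Complex.ofReal_mul, Complex.ofReal_im, ← ht0im]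
          ring
  -- conclude
  rcases eq_or_lt_of_le hv₁0 with hv₁ | hv₁
  · have hneg : (-sig).PosSemidef := by
      have h := hsigle
      rw [← hv₁] at h
      simpa using h
    have hsigtr : sig.trace = 0 := by
      have h1 : 0 ≤ sig.trace := trace_psd_nonneg hsigpsd
      have h2 : 0 ≤ (-sig).trace := trace_psd_nonneg hneg
      rw [Matrix.trace_neg] at h2
      exact le_antisymm (neg_nonneg.mp h2) h1
    have hNtr : N.trace = 0 := by rw [← trace_ptraceW N, ← hsigdef]; exact hsigtr
    have hN0 : N = 0 := psd_trace_zero hN hNtr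
    rw [hN0, Matrix.mul_zero, Matrix.trace_zero, Complex.zero_re]
    exact mul_nonneg hv₁0 hv₂0
  · set c₁ := Complex.ofReal (sdpValue Q₁)⁻¹ with hc₁def
    set D := (1 : Matrix X₂ X₂ ℂ) - c₁ • sig with hDdef
    have hD : D.PosSemidef := by
      have h : D = c₁ • ((Complex.ofReal (sdpValue Q₁)) • (1 : Matrix X₂ X₂ ℂ) - sig) := by
        rw [hDdef, smul_sub, smul_smul, hc₁def, ← Complex.ofReal_mul,
          inv_mul_cancel₀ (ne_of_gt hv₁), Complex.ofReal_one, one_smul]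
      rw [h, hc₁def]
      exact smul_posSemidef hsigle (inv_nonneg.mpr (le_of_lt hv₁))
    set c₂ := Complex.ofReal ((Fintype.card W₂ : ℝ))⁻¹ with hc₂def
    have hcardne : ((Fintype.card W₂ : ℝ)) ≠ 0 := by
      simp [Fintype.card_ne_zero]
    set N'' := c₁ • N + c₂ • ((1 : Matrix W₂ W₂ ℂ) ⊗ₖ D) with hN''def
    have hN''psd : N''.PosSemidef := by
      rw [hN''def, hc₁def, hc₂def]
      exact Matrix.PosSemidef.add
        (smul_posSemidef hN (inv_nonneg.mpr (le_of_lt hv₁)))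
        (smul_posSemidef (kron_posSemidef Matrix.PosSemidef.one hD)
          (inv_nonneg.mpr (Nat.cast_nonneg _)))
    have hN''pt : ptraceW N'' = 1 := by
      rw [hN''def, ptraceW_add, ptraceW_smul, ptraceW_smul, ptraceW_kron, Matrix.trace_one,
        smul_smul]
      rw [show c₂ * ((Fintype.card W₂ : ℂ)) = 1 from by
        rw [hc₂def, show ((Fintype.card W₂ : ℕ) : ℂ) = Complex.ofReal ((Fintype.card W₂ : ℝ))
            from by push_cast; rfl,
          ← Complex.ofReal_mul, inv_mul_cancel₀ hcardne, Complex.ofReal_one]]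
      rw [one_smul, hDdef, ← hsigdef, add_sub_cancel]
    have hmem : ((Q₂ * N'').trace).re ∈ sdpSet Q₂ := ⟨N'', hN''psd, hN''pt, rfl⟩
    have hle := le_csSup (bddAbove_sdpSet Q₂) hmem
    have hsplit : (Q₂ * N'').trace
        = c₁ * (Q₂ * N).trace + c₂ * (Q₂ * ((1 : Matrix W₂ W₂ ℂ) ⊗ₖ D)).trace := by
      rw [hN''def, Matrix.mul_add, Matrix.mul_smul, Matrix.mul_smul, Matrix.trace_add,
        Matrix.trace_smul, Matrix.trace_smul]
      rfl
    have h2nn : 0 ≤ ((Q₂ * ((1 : Matrix W₂ W₂ ℂ) ⊗ₖ D)).trace).re :=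
      (Complex.nonneg_iff.mp
        (trace_mul_psd_nonneg hQ₂ (kron_posSemidef Matrix.PosSemidef.one hD))).1
    have hre : ((Q₂ * N'').trace).re = (sdpValue Q₁)⁻¹ * ((Q₂ * N).trace).re
        + ((Fintype.card W₂ : ℝ))⁻¹ * ((Q₂ * ((1 : Matrix W₂ W₂ ℂ) ⊗ₖ D)).trace).re := by
      rw [hsplit, Complex.add_re, hc₁def, hc₂def, Complex.re_ofReal_mul, Complex.re_ofReal_mul]
    rw [← sdpValue_eq Q₂] at hle
    rw [hre] at hle
    have hc2nn : 0 ≤ ((Fintype.card W₂ : ℝ))⁻¹ *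
        ((Q₂ * ((1 : Matrix W₂ W₂ ℂ) ⊗ₖ D)).trace).re :=
      mul_nonneg (inv_nonneg.mpr (Nat.cast_nonneg _)) h2nn
    have hfin : (sdpValue Q₁)⁻¹ * ((Q₂ * N).trace).re ≤ sdpValue Q₂ := by
      linarith
    calc ((Q₂ * N).trace).re
        = sdpValue Q₁ * ((sdpValue Q₁)⁻¹ * ((Q₂ * N).trace).re) := by
          field_simp
      _ ≤ sdpValue Q₁ * sdpValue Q₂ := mul_le_mul_of_nonneg_left hfin hv₁0

theorem core (Q₁ : Matrix (W₁ × X₁) (W₁ × X₁) ℂ) (Q₂ : Matrix (W₂ × X₂) (W₂ × X₂) ℂ)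
    (hQ₁ : Q₁.PosSemidef) (hQ₂ : Q₂.PosSemidef) :
    sdpValue ((Q₁ ⊗ₖ Q₂).submatrix (phi (W₁ := W₁) (X₁ := X₁) (W₂ := W₂) (X₂ := X₂))
        (phi (W₁ := W₁) (X₁ := X₁) (W₂ := W₂) (X₂ := X₂)))
      = sdpValue Q₁ * sdpValue Q₂ := by
  set Qc := (Q₁ ⊗ₖ Q₂).submatrix (phi (W₁ := W₁) (X₁ := X₁) (W₂ := W₂) (X₂ := X₂))
      (phi (W₁ := W₁) (X₁ := X₁) (W₂ := W₂) (X₂ := X₂)) with hQc_def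
  have hQc : Qc.PosSemidef := (kron_posSemidef hQ₁ hQ₂).submatrix _
  -- empty cases
  rcases isEmpty_or_nonempty X₁ with hX₁ | hX₁
  · rw [sdpValue_empty Q₁, sdpValue_empty Qc, zero_mul]
  rcases isEmpty_or_nonempty X₂ with hX₂ | hX₂
  · rw [sdpValue_empty Q₂, sdpValue_empty Qc, mul_zero]
  rcases isEmpty_or_nonempty W₁ with hW₁ | hW₁
  · rw [sdpValue_emptyW Q₁, sdpValue_emptyW Qc, zero_mul]
  rcases isEmpty_or_nonempty W₂ with hW₂ | hW₂
  · rw [sdpValue_emptyW Q₂, sdpValue_emptyW Qc, mul_zero]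
  -- main case
  have hS1ne : (sdpSet Q₁).Nonempty := exists_feasible Q₁
  have hS2ne : (sdpSet Q₂).Nonempty := exists_feasible Q₂
  have hScne : (sdpSet Qc).Nonempty := exists_feasible Qc
  have hv₁0 : 0 ≤ sdpValue Q₁ := sdpValue_nonneg hQ₁
  have hv₂0 : 0 ≤ sdpValue Q₂ := sdpValue_nonneg hQ₂
  have hvc0 : 0 ≤ sdpValue Qc := sdpValue_nonneg hQc
  apply le_antisymm
  · -- submultiplicativity
    rw [sdpValue_eq Qc]
    refine csSup_le hScne ?_
    rintro r ⟨Mc, hMc, hpt1, rfl⟩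
    exact sub_mult Q₁ Q₂ hQ₁ hQ₂ Mc hMc hpt1
  · -- supermultiplicativity
    have hprod : ∀ a ∈ sdpSet Q₁, ∀ b ∈ sdpSet Q₂, a * b ∈ sdpSet Qc := by
      rintro a ⟨M₁, hM₁, h11, rfl⟩ b ⟨M₂, hM₂, h12, rfl⟩
      refine ⟨(M₁ ⊗ₖ M₂).submatrix phi phi, (kron_posSemidef hM₁ hM₂).submatrix _, ?_, ?_⟩
      · rw [ptraceW_kron_submatrix_phi, h11, h12, Matrix.one_kronecker_one]
      · have htr : (Qc * (M₁ ⊗ₖ M₂).submatrix phi phi).trace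
            = (Q₁ * M₁).trace * (Q₂ * M₂).trace := by
          rw [hQc_def, Matrix.submatrix_mul_equiv, trace_submatrix_equiv,
            ← Matrix.mul_kronecker_mul, Matrix.trace_kronecker]
        rw [htr, Complex.mul_re, trace_mul_im_zero hQ₁ hM₁, zero_mul, sub_zero]
    have h2 : ∀ a ∈ sdpSet Q₁, a * sdpValue Q₂ ≤ sdpValue Qc := by
      intro a ha
      have ha0 : 0 ≤ a := sdpSet_mem_nonneg hQ₁ ha
      rcases eq_or_lt_of_le ha0 with h | h
      · rw [← h, zero_mul]; exact hvc0
      · have hb : sdpValue Q₂ ≤ sdpValue Qc / a := by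
          rw [sdpValue_eq Q₂]
          refine csSup_le hS2ne fun b hb => ?_
          rw [le_div_iff₀ h, mul_comm]
          exact le_csSup (bddAbove_sdpSet Qc) (hprod a ha b hb)
        calc a * sdpValue Q₂ ≤ a * (sdpValue Qc / a) :=
              mul_le_mul_of_nonneg_left hb ha0
          _ = sdpValue Qc := by field_simp
    rcases eq_or_lt_of_le hv₂0 with h | h
    · rw [← h, mul_zero]; exact hvc0
    · have : sdpValue Q₁ ≤ sdpValue Qc / sdpValue Q₂ := by
        rw [sdpValue_eq Q₁]
        exact csSup_le hS1ne fun a ha => (le_div_iff₀ h).mpr (h2 a ha)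
      calc sdpValue Q₁ * sdpValue Q₂ ≤ (sdpValue Qc / sdpValue Q₂) * sdpValue Q₂ :=
            mul_le_mul_of_nonneg_right this hv₂0
        _ = sdpValue Qc := by field_simp

end Core

lemma sdpSet_reindex_subset {W' W X : Type} [Fintype W'] [Fintype W] [Fintype X]
    [DecidableEq X] (e : W' ≃ W) (Q : Matrix (W × X) (W × X) ℂ) :
    sdpSet (Q.submatrix (e.prodCongr (Equiv.refl X)) (e.prodCongr (Equiv.refl X)))
      ⊆ sdpSet Q := by
  rintro r ⟨M, hM, h1, rfl⟩
  set f := e.prodCongr (Equiv.refl X) with hfdef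
  refine ⟨M.submatrix f.symm f.symm, hM.submatrix _, ?_, ?_⟩
  · ext x x'
    rw [ptraceW_apply]
    have : ∀ w : W, M.submatrix (⇑f.symm) (⇑f.symm) (w, x) (w, x')
        = M (e.symm w, x) (e.symm w, x') := fun w => rfl
    rw [Finset.sum_congr rfl fun w _ => this w]
    have h2 := congrFun (congrFun h1 x) x'
    rw [ptraceW_apply] at h2
    rw [← h2]
    exact Fintype.sum_equiv e.symm _ _ (fun w => rfl)
  · have hMM : (M.submatrix (⇑f.symm) (⇑f.symm)).submatrix (⇑f) (⇑f) = M := by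
      simp [Matrix.submatrix_submatrix]
    have : (Q.submatrix (⇑f) (⇑f)) * M
        = ((Q * M.submatrix (⇑f.symm) (⇑f.symm)).submatrix (⇑f) (⇑f)) := by
      rw [← hMM, Matrix.submatrix_mul_equiv, hMM]
    rw [this, trace_submatrix_equiv]

lemma sdpValue_reindex {W' W X : Type} [Fintype W'] [Fintype W] [Fintype X]
    [DecidableEq X] (e : W' ≃ W) (Q : Matrix (W × X) (W × X) ℂ) :
    sdpValue (Q.submatrix (e.prodCongr (Equiv.refl X)) (e.prodCongr (Equiv.refl X)))
      = sdpValue Q := by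
  rw [sdpValue_eq, sdpValue_eq]
  congr 1
  apply le_antisymm
  · exact sdpSet_reindex_subset e Q
  · intro r hr
    have h := sdpSet_reindex_subset e.symm
      (Q.submatrix (e.prodCongr (Equiv.refl X)) (e.prodCongr (Equiv.refl X)))
    have heq : ((Q.submatrix (e.prodCongr (Equiv.refl X)) (e.prodCongr (Equiv.refl X))).submatrix
        ((e.symm).prodCongr (Equiv.refl X)) ((e.symm).prodCongr (Equiv.refl X))) = Q := by
      ext i j
      simp only [Matrix.submatrix_apply]
      obtain ⟨w, x⟩ := i
      obtain ⟨w', x'⟩ := j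
      simp
    rw [heq] at h
    exact h hr

end SdpCore

/-- Product property (Mittal–Szegedy) of the counterfeiting SDP: for positive
semidefinite objective operators `Q₁` on `(Y₁×Z₁)⊗X₁` and `Q₂` on `(Y₂×Z₂)⊗X₂`,
the SDP value of the tensor product `Q₁ ⊗ Q₂` (reordered as an operator on
`((Y₁×Y₂)×(Z₁×Z₂))⊗(X₁×X₂)`) is the product of the individual SDP values. -/
theorem sdp_product_property
    {Y₁ Z₁ X₁ Y₂ Z₂ X₂ : Type}
    [Fintype Y₁] [Fintype Z₁] [Fintype X₁] [Fintype Y₂] [Fintype Z₂] [Fintype X₂]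
    [DecidableEq X₁] [DecidableEq X₂]
    (Q₁ : Matrix ((Y₁ × Z₁) × X₁) ((Y₁ × Z₁) × X₁) ℂ)
    (Q₂ : Matrix ((Y₂ × Z₂) × X₂) ((Y₂ × Z₂) × X₂) ℂ)
    (hQ₁ : Q₁.PosSemidef) (hQ₂ : Q₂.PosSemidef) :
    sdpValue (Matrix.of fun (a b : ((Y₁ × Y₂) × (Z₁ × Z₂)) × (X₁ × X₂)) =>
        Q₁ ((a.1.1.1, a.1.2.1), a.2.1) ((b.1.1.1, b.1.2.1), b.2.1) *
        Q₂ ((a.1.1.2, a.1.2.2), a.2.2) ((b.1.1.2, b.1.2.2), b.2.2))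
      = sdpValue Q₁ * sdpValue Q₂ := by
  letI : DecidableEq Y₁ := Classical.decEq _
  letI : DecidableEq Z₁ := Classical.decEq _
  letI : DecidableEq Y₂ := Classical.decEq _
  letI : DecidableEq Z₂ := Classical.decEq _
  set g : ((Y₁ × Y₂) × (Z₁ × Z₂)) ≃ ((Y₁ × Z₁) × (Y₂ × Z₂)) :=
    { toFun := fun p => ((p.1.1, p.2.1), (p.1.2, p.2.2)),
      invFun := fun q => ((q.1.1, q.2.1), (q.1.2, q.2.2)),
      left_inv := fun p => rfl, right_inv := fun q => rfl } with hg
  have hmat : (Matrix.of fun (a b : ((Y₁ × Y₂) × (Z₁ × Z₂)) × (X₁ × X₂)) =>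
        Q₁ ((a.1.1.1, a.1.2.1), a.2.1) ((b.1.1.1, b.1.2.1), b.2.1) *
        Q₂ ((a.1.1.2, a.1.2.2), a.2.2) ((b.1.1.2, b.1.2.2), b.2.2))
      = ((Q₁ ⊗ₖ Q₂).submatrix (SdpCore.phi) (SdpCore.phi)).submatrix
          (g.prodCongr (Equiv.refl (X₁ × X₂))) (g.prodCongr (Equiv.refl (X₁ × X₂))) := by
    ext a b
    rfl
  rw [hmat, SdpCore.sdpValue_reindex, SdpCore.core Q₁ Q₂ hQ₁ hQ₂]
end

section
/- Let {|e_t^0⟩}_{t=0}^{d−1} and {|e_t^1⟩}_{t=0}^{d−1} be two orthonormal bases of ℂ^d, and let c = max_{s,t} |⟨e_s^0 | e_t^1⟩|² be their effective overlap. Consider the single-qudit classical-verification ticket scheme: the key is (t,b) ∈ {0,…,d−1} × {0,1} chosen uniformly, the ticket state is |e_t^b⟩, the bank independently sends two uniform challenges c_1, c_2 ∈ {0,1}, and an answer pair (a_1, a_2) is accepted if a_1 = t whenever c_1 = b and a_2 = t whenever c_2 = b. Then for every counterfeiting strategy, given for each challenge pair (c_1,c_2) by a POVM {A_{c_1 c_2}^{a_1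 a_2}}_{a_1,a_2 ∈ {0,…,d−1}} on ℂ^d (positive semidefinite operators summing to I_d), the success probability (1/(2d)) Σ_{t,b} (1/4) Σ_{c_1,c_2} Σ_{(a_1,a_2) valid for (t,b,c_1,c_2)} ⟨e_t^b| A_{c_1 c_2}^{a_1 a_2} |e_t^b⟩ is at most 3/4 + √c/4. -/
open Matrix
open scoped ComplexOrder

lemma dotCS (d : ℕ) (x w : Fin d → ℂ) :
    ‖star x ⬝ᵥ w‖ ^ 2 ≤ (star x ⬝ᵥ x).re * (star w ⬝ᵥ w).re := by
  let X : EuclideanSpace ℂ (Fin d) := WithLp.toLp 2 x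
  let W : EuclideanSpace ℂ (Fin d) := WithLp.toLp 2 w
  have h1 : star x ⬝ᵥ w = inner ℂ X W := by simp only [X, W, EuclideanSpace.inner_toLp_toLp]; exact dotProduct_comm _ _
  have h2 : (star x ⬝ᵥ x).re = ‖X‖ ^ 2 := by
    have : star x ⬝ᵥ x = inner ℂ X X := by simp only [X, EuclideanSpace.inner_toLp_toLp]; exact dotProduct_comm _ _
    rw [this, inner_self_eq_norm_sq_to_K]
    norm_cast
  have h3 : (star w ⬝ᵥ w).re = ‖W‖ ^ 2 := by
    have : star w ⬝ᵥ w = inner ℂ W W := by simp only [W, EuclideanSpace.inner_toLp_toLp]; exact dotProduct_comm _ _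
    rw [this, inner_self_eq_norm_sq_to_K]
    norm_cast
  have h4 := norm_inner_le_norm (𝕜 := ℂ) X W
  rw [h1, h2, h3]
  calc ‖inner ℂ X W‖ ^ 2 ≤ (‖X‖ * ‖W‖) ^ 2 := by
        apply pow_le_pow_left₀ (by positivity) h4
      _ = ‖X‖^2 * ‖W‖^2 := by ring

lemma re_dot_self (d : ℕ) (w : Fin d → ℂ) :
    (star w ⬝ᵥ w).re = ∑ i, Complex.normSq (w i) := by
  simp [dotProduct, Complex.re_sum, Complex.normSq_eq_conj_mul_self, Pi.star_apply,
    Complex.mul_re, Complex.normSq]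

lemma two_vec (d : ℕ) (u v w : Fin d → ℂ) (hu : star u ⬝ᵥ u = 1) (hv : star v ⬝ᵥ v = 1)
    (g : ℝ) (hg : ‖star u ⬝ᵥ v‖ ≤ g) :
    Complex.normSq (star u ⬝ᵥ w) + Complex.normSq (star v ⬝ᵥ w)
      ≤ (1 + g) * (star w ⬝ᵥ w).re := by
  have hg0 : 0 ≤ g := le_trans (norm_nonneg _) hg
  set α := star u ⬝ᵥ w with hα
  set β := star v ⬝ᵥ w with hβ
  set γ := star u ⬝ᵥ v with hγ
  set x : Fin d → ℂ := α • u + β • v with hx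
  set N : ℝ := Complex.normSq α + Complex.normSq β with hN
  have hN0 : 0 ≤ N := add_nonneg (Complex.normSq_nonneg _) (Complex.normSq_nonneg _)
  have hxw : star x ⬝ᵥ w = (N : ℂ) := by
    simp only [hx, star_add, star_smul, add_dotProduct, smul_dotProduct, smul_eq_mul,
      ← hα, ← hβ, Complex.star_def]
    rw [hN]
    push_cast [Complex.normSq_eq_conj_mul_self]
    ring
  have hvu : star v ⬝ᵥ u = (starRingEnd ℂ) γ := by
    rw [hγ, star_dotProduct]; rfl
  have hxx : star x ⬝ᵥ x = (N : ℂ) + (starRingEnd ℂ) α * β * γ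
      + (starRingEnd ℂ) ((starRingEnd ℂ) α * β * γ) := by
    simp only [hx, star_add, star_smul, add_dotProduct, smul_dotProduct,
      dotProduct_add, dotProduct_smul, smul_eq_mul, hu, hv, hvu, ← hγ, Complex.star_def]
    simp only [_root_.map_mul, Complex.conj_conj]
    rw [hN]
    push_cast [Complex.normSq_eq_conj_mul_self]
    ring
  have hxxre : (star x ⬝ᵥ x).re ≤ (1 + g) * N := by
    rw [hxx]
    have : ((N:ℂ) + (starRingEnd ℂ) α * β * γ + (starRingEnd ℂ) ((starRingEnd ℂ) α * β * γ)).re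
        = N + 2 * ((starRingEnd ℂ) α * β * γ).re := by
      simp [Complex.add_re, Complex.conj_re]; ring
    rw [this]
    have h1 : ((starRingEnd ℂ) α * β * γ).re ≤ ‖α‖ * ‖β‖ * g := by
      calc ((starRingEnd ℂ) α * β * γ).re ≤ ‖(starRingEnd ℂ) α * β * γ‖ :=
            Complex.re_le_norm _
        _ = ‖α‖ * ‖β‖ * ‖γ‖ := by
            simp [_root_.map_mul]
        _ ≤ ‖α‖ * ‖β‖ * g := by
            apply mul_le_mul_of_nonneg_left hg (by positivity)
    have h2 : 2 * (‖α‖ * ‖β‖) ≤ N := by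
      have := sq_nonneg (‖α‖ - ‖β‖)
      rw [hN, ← Complex.sq_norm, ← Complex.sq_norm]
      nlinarith
    nlinarith [norm_nonneg α, norm_nonneg β]
  have hCS := dotCS d x w
  rw [hxw] at hCS
  have habs : ‖((N:ℝ):ℂ)‖ = N := by
    rw [Complex.norm_real, Real.norm_of_nonneg hN0]
  rw [habs] at hCS
  have hw0 : 0 ≤ (star w ⬝ᵥ w).re := by
    rw [re_dot_self]
    exact Finset.sum_nonneg fun i _ => Complex.normSq_nonneg _
  rcases eq_or_lt_of_le hN0 with h | h
  · rw [hN] at h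
    calc Complex.normSq α + Complex.normSq β = N := hN.symm
      _ = 0 := h.symm ▸ (by rw [hN, ← h])
      _ ≤ (1+g) * (star w ⬝ᵥ w).re := by positivity
  · have key : N ^ 2 ≤ ((1+g) * N) * (star w ⬝ᵥ w).re :=
      le_trans hCS (mul_le_mul_of_nonneg_right hxxre hw0)
    have : N ≤ (1+g) * (star w ⬝ᵥ w).re := by nlinarith
    linarith [hN ▸ this]

lemma key_mat (d : ℕ) (M : Matrix (Fin d) (Fin d) ℂ) (hM : M.PosSemidef)
    (u v : Fin d → ℂ) (hu : star u ⬝ᵥ u = 1) (hv : star v ⬝ᵥ v = 1)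
    (g : ℝ) (hg : ‖star u ⬝ᵥ v‖ ≤ g) :
    (star u ⬝ᵥ M *ᵥ u).re + (star v ⬝ᵥ M *ᵥ v).re ≤ (1 + g) * M.trace.re := by
  open scoped MatrixOrder in obtain ⟨B, hB⟩ := CStarAlgebra.nonneg_iff_eq_star_mul_self.mp hM.nonneg
  rw [show star B = Bᴴ from rfl] at hB; subst hB
  have h1 : ∀ z : Fin d → ℂ, star z ⬝ᵥ (Bᴴ * B) *ᵥ z = star (B *ᵥ z) ⬝ᵥ (B *ᵥ z) := by
    intro z
    rw [← Matrix.mulVec_mulVec, Matrix.dotProduct_mulVec, ← Matrix.star_mulVec]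
  have htr : (Bᴴ * B).trace.re = ∑ i, ∑ j, Complex.normSq (B i j) := by
    rw [Matrix.trace]
    simp only [Matrix.diag, Matrix.mul_apply, Matrix.conjTranspose_apply]
    rw [Complex.re_sum]
    rw [Finset.sum_comm]
    congr 1; ext i
    rw [Complex.re_sum]
    congr 1; ext j
    rw [Complex.star_def, ← Complex.normSq_eq_conj_mul_self, Complex.ofReal_re]
  rw [h1 u, h1 v, re_dot_self, re_dot_self, htr, Finset.mul_sum,
    ← Finset.sum_add_distrib]
  apply Finset.sum_le_sum
  intro i _
  have hrow := two_vec d u v (star (B i)) hu hv g hg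
  have e1 : star u ⬝ᵥ star (B i) = star ((B *ᵥ u) i) := by
    rw [Matrix.star_dotProduct_star]; rfl
  have e2 : star v ⬝ᵥ star (B i) = star ((B *ᵥ v) i) := by
    rw [Matrix.star_dotProduct_star]; rfl
  have e3 : (star (star (B i)) ⬝ᵥ star (B i)).re = ∑ j, Complex.normSq (B i j) := by
    rw [re_dot_self]
    simp [Complex.normSq_conj]
  rw [e1, e2, e3] at hrow
  simpa [Complex.normSq_conj] using hrow

section Main

variable {d : ℕ} (e : Fin 2 → Fin d → (Fin d → ℂ))
  (A : Fin 2 → Fin 2 → Fin d → Fin d → Matrix (Fin d) (Fin d) ℂ)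

noncomputable def Pval (b : Fin 2) (t : Fin d) (M : Matrix (Fin d) (Fin d) ℂ) : ℝ :=
  (star (e b t) ⬝ᵥ M *ᵥ (e b t)).re

noncomputable def Fval (b c₁ c₂ : Fin 2) (t : Fin d) : ℝ :=
  ∑ a₁, ∑ a₂, if (c₁ = b → a₁ = t) ∧ (c₂ = b → a₂ = t)
    then Pval e b t (A c₁ c₂ a₁ a₂) else 0

lemma Pval_sum {ι : Type*} (s : Finset ι) (f : ι → Matrix (Fin d) (Fin d) ℂ)
    (b : Fin 2) (t : Fin d) :
    ∑ i ∈ s, Pval e b t (f i) = Pval e b t (∑ i ∈ s, f i) := by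
  classical
  induction s using Finset.induction with
  | empty => simp [Pval]
  | insert _ _ h ih =>
    rw [Finset.sum_insert h, Finset.sum_insert h, ih]
    simp [Pval, Matrix.add_mulVec, dotProduct_add, Complex.add_re]

end Main


open Matrix
open scoped ComplexOrder

/-- For two orthonormal bases `{|e_t^0⟩}` and `{|e_t^1⟩}` of `ℂ^d` with effective
overlap `c = max_{s,t} |⟨e_s^0|e_t^1⟩|²`, every counterfeiting strategy against the
single-qudit classical-verification ticket scheme (key `(t,b)` uniform, ticket
`|e_t^b⟩`, two independent uniform challenges `c₁,c₂ ∈ {0,1}`, answer `(a₁,a₂)`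
accepted iff `a_j = t` whenever `c_j = b`), given by POVMs
`{A_{c₁c₂}^{a₁a₂}}` on `ℂ^d`, has success probability at most `3/4 + √c/4`. -/
theorem classical_verification_counterfeit_bound (d : ℕ) (hd : 0 < d)
    (e : Fin 2 → Fin d → (Fin d → ℂ))
    (he : ∀ b s t, star (e b s) ⬝ᵥ e b t = if s = t then 1 else 0)
    (c : ℝ)
    (hc : IsGreatest {x : ℝ | ∃ s t, x = Complex.normSq (star (e 0 s) ⬝ᵥ e 1 t)} c)
    (A : Fin 2 → Fin 2 → Fin d → Fin d → Matrix (Fin d) (Fin d) ℂ)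
    (hApos : ∀ c₁ c₂ a₁ a₂, (A c₁ c₂ a₁ a₂).PosSemidef)
    (hAsum : ∀ c₁ c₂, ∑ a₁, ∑ a₂, A c₁ c₂ a₁ a₂ = 1) :
    (1 / (2 * d) : ℝ) * ∑ b : Fin 2, ∑ t : Fin d,
        (1 / 4 : ℝ) * ∑ c₁ : Fin 2, ∑ c₂ : Fin 2, ∑ a₁ : Fin d, ∑ a₂ : Fin d,
          (if (c₁ = b → a₁ = t) ∧ (c₂ = b → a₂ = t)
            then (star (e b t) ⬝ᵥ (A c₁ c₂ a₁ a₂).mulVec (e b t)).re else 0)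
      ≤ 3 / 4 + Real.sqrt c / 4 := by
  -- basic facts
  have hunit : ∀ b t, star (e b t) ⬝ᵥ e b t = 1 := fun b t => by simpa using he b t t
  have hc0 : 0 ≤ c := by
    obtain ⟨s, t, hst⟩ := hc.1
    exact hst ▸ Complex.normSq_nonneg _
  have hov : ∀ s t, ‖star (e 0 s) ⬝ᵥ e 1 t‖ ≤ Real.sqrt c := by
    intro s t
    have h := hc.2 ⟨s, t, rfl⟩
    rw [Complex.norm_def]
    exact Real.sqrt_le_sqrt h
  have hP0 : ∀ b t c₁ c₂ a₁ a₂, 0 ≤ Pval e b t (A c₁ c₂ a₁ a₂) := by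
    intro b t c₁ c₂ a₁ a₂
    have h := (posSemidef_iff_dotProduct_mulVec.mp (hApos c₁ c₂ a₁ a₂)).2 (e b t)
    exact (Complex.le_def.mp h).1
  have hP1 : ∀ b t c₁ c₂, ∑ a₁, ∑ a₂, Pval e b t (A c₁ c₂ a₁ a₂) = 1 := by
    intro b t c₁ c₂
    rw [Finset.sum_congr rfl fun a₁ _ => Pval_sum e Finset.univ (A c₁ c₂ a₁) b t,
      Pval_sum e Finset.univ _ b t, hAsum]
    simp [Pval, Matrix.one_mulVec, hunit]
  -- bound on Pval for PSD pieces: single term ≤ full sum = 1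
  have hPle1 : ∀ b t c₁ c₂, Pval e b t (A c₁ c₂ t t) ≤ 1 := by
    intro b t c₁ c₂
    rw [← hP1 b t c₁ c₂]
    calc Pval e b t (A c₁ c₂ t t) ≤ ∑ a₂, Pval e b t (A c₁ c₂ t a₂) :=
          Finset.single_le_sum (fun a _ => hP0 b t c₁ c₂ t a) (Finset.mem_univ t)
      _ ≤ ∑ a₁, ∑ a₂, Pval e b t (A c₁ c₂ a₁ a₂) :=
          Finset.single_le_sum
            (f := fun a₁ => ∑ a₂, Pval e b t (A c₁ c₂ a₁ a₂))
            (fun a _ => Finset.sum_nonneg fun a₂ _ => hP0 b t c₁ c₂ a a₂)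
            (Finset.mem_univ t)
  -- rewrite in terms of Fval
  have hFdef : ∀ b c₁ c₂ t, (∑ a₁, ∑ a₂, if (c₁ = b → a₁ = t) ∧ (c₂ = b → a₂ = t)
      then (star (e b t) ⬝ᵥ (A c₁ c₂ a₁ a₂).mulVec (e b t)).re else 0)
      = Fval e A b c₁ c₂ t := fun _ _ _ _ => rfl
  simp only [hFdef]
  -- case computations for Fval
  have hFfull : ∀ b c₁ c₂ t, c₁ ≠ b → c₂ ≠ b → Fval e A b c₁ c₂ t = 1 := by
    intro b c₁ c₂ t h₁ h₂
    rw [Fval, ← hP1 b t c₁ c₂]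
    refine Finset.sum_congr rfl fun a₁ _ => Finset.sum_congr rfl fun a₂ _ => ?_
    simp [h₁, h₂]
  have hFdiag : ∀ b t, Fval e A b b b t = Pval e b t (A b b t t) := by
    intro b t
    rw [Fval]
    simp [ite_and, Finset.sum_ite_eq']
  have hFmix₁ : ∀ b c₁ c₂ t, c₁ = b → c₂ ≠ b →
      Fval e A b c₁ c₂ t = ∑ a₂, Pval e b t (A c₁ c₂ t a₂) := by
    intro b c₁ c₂ t h₁ h₂
    subst h₁
    rw [Fval]
    simp [h₂, Finset.sum_ite_eq']
  have hFmix₂ : ∀ b c₁ c₂ t, c₁ ≠ b → c₂ = b →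
      Fval e A b c₁ c₂ t = ∑ a₁, Pval e b t (A c₁ c₂ a₁ t) := by
    intro b c₁ c₂ t h₁ h₂
    subst h₂
    rw [Fval]
    simp [h₁, Finset.sum_ite_eq']
  -- sums over t
  have hGdiag : ∀ b : Fin 2, ∑ t, Fval e A b b b t ≤ (d : ℝ) := by
    intro b
    calc ∑ t, Fval e A b b b t = ∑ t, Pval e b t (A b b t t) := by simp [hFdiag]
      _ ≤ ∑ _t : Fin d, (1 : ℝ) := Finset.sum_le_sum fun t _ => hPle1 b t b b
      _ = d := by simp
  have hGfull : ∀ b c₁ c₂ : Fin 2, c₁ ≠ b → c₂ ≠ b →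
      ∑ t, Fval e A b c₁ c₂ t = (d : ℝ) := by
    intro b c₁ c₂ h₁ h₂
    simp [hFfull b c₁ c₂ _ h₁ h₂]
  -- trace computation
  have htr : ∀ c₁ c₂ : Fin 2, ∑ t : Fin d, ∑ s : Fin d, ((A c₁ c₂ t s).trace).re = (d : ℝ) := by
    intro c₁ c₂
    have h : ∑ t : Fin d, ∑ s : Fin d, (A c₁ c₂ t s).trace = (d : ℂ) := by
      have : ∑ t : Fin d, ∑ s : Fin d, (A c₁ c₂ t s).trace
          = (∑ t : Fin d, ∑ s : Fin d, A c₁ c₂ t s).trace := by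
        simp [Matrix.trace_sum]
      rw [this, hAsum, Matrix.trace_one]
      simp
    calc ∑ t : Fin d, ∑ s : Fin d, ((A c₁ c₂ t s).trace).re
        = (∑ t : Fin d, ∑ s : Fin d, (A c₁ c₂ t s).trace).re := by
          simp [Complex.re_sum]
      _ = (d : ℝ) := by rw [h]; simp
  -- mixed challenge bounds
  have hmix01 : (∑ t, Fval e A 0 0 1 t) + ∑ t, Fval e A 1 0 1 t
      ≤ (1 + Real.sqrt c) * d := by
    have h1 : ∑ t, Fval e A 0 0 1 t = ∑ t, ∑ s, Pval e 0 t (A 0 1 t s) :=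
      Finset.sum_congr rfl fun t _ => hFmix₁ 0 0 1 t rfl (by decide)
    have h2 : ∑ t, Fval e A 1 0 1 t = ∑ t, ∑ s, Pval e 1 s (A 0 1 t s) := by
      rw [Finset.sum_congr rfl fun t _ => hFmix₂ 1 0 1 t (by decide) rfl]
      exact Finset.sum_comm
    rw [h1, h2, ← Finset.sum_add_distrib]
    calc ∑ t, ((∑ s, Pval e 0 t (A 0 1 t s)) + ∑ s, Pval e 1 s (A 0 1 t s))
        = ∑ t, ∑ s, (Pval e 0 t (A 0 1 t s) + Pval e 1 s (A 0 1 t s)) := by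
          simp [Finset.sum_add_distrib]
      _ ≤ ∑ t : Fin d, ∑ s : Fin d, (1 + Real.sqrt c) * ((A 0 1 t s).trace).re := by
          refine Finset.sum_le_sum fun t _ => Finset.sum_le_sum fun s _ => ?_
          exact key_mat d (A 0 1 t s) (hApos 0 1 t s) (e 0 t) (e 1 s)
            (hunit 0 t) (hunit 1 s) (Real.sqrt c) (hov t s)
      _ = (1 + Real.sqrt c) * d := by
          rw [← htr 0 1, Finset.mul_sum]
          exact Finset.sum_congr rfl fun t _ => (Finset.mul_sum _ _ _).symm
  have hmix10 : (∑ t, Fval e A 0 1 0 t) + ∑ t, Fval e A 1 1 0 t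
      ≤ (1 + Real.sqrt c) * d := by
    have h1 : ∑ t, Fval e A 0 1 0 t = ∑ t, ∑ s, Pval e 0 s (A 1 0 t s) := by
      rw [Finset.sum_congr rfl fun t _ => hFmix₂ 0 1 0 t (by decide) rfl]
      exact Finset.sum_comm
    have h2 : ∑ t, Fval e A 1 1 0 t = ∑ t, ∑ s, Pval e 1 t (A 1 0 t s) :=
      Finset.sum_congr rfl fun t _ => hFmix₁ 1 1 0 t rfl (by decide)
    rw [h1, h2, ← Finset.sum_add_distrib]
    calc ∑ t, ((∑ s, Pval e 0 s (A 1 0 t s)) + ∑ s, Pval e 1 t (A 1 0 t s))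
        = ∑ t, ∑ s, (Pval e 0 s (A 1 0 t s) + Pval e 1 t (A 1 0 t s)) := by
          simp [Finset.sum_add_distrib]
      _ ≤ ∑ t : Fin d, ∑ s : Fin d, (1 + Real.sqrt c) * ((A 1 0 t s).trace).re := by
          refine Finset.sum_le_sum fun t _ => Finset.sum_le_sum fun s _ => ?_
          exact key_mat d (A 1 0 t s) (hApos 1 0 t s) (e 0 s) (e 1 t)
            (hunit 0 s) (hunit 1 t) (Real.sqrt c) (hov s t)
      _ = (1 + Real.sqrt c) * d := by
          rw [← htr 1 0, Finset.mul_sum]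
          exact Finset.sum_congr rfl fun t _ => (Finset.mul_sum _ _ _).symm
  -- total bound
  have htot : ∑ b : Fin 2, ∑ c₁ : Fin 2, ∑ c₂ : Fin 2, ∑ t, Fval e A b c₁ c₂ t
      ≤ (6 + 2 * Real.sqrt c) * d := by
    simp only [Fin.sum_univ_two]
    have e1 := hGdiag 0
    have e2 := hGdiag 1
    have e3 := hGfull 1 0 0 (by decide) (by decide)
    have e4 := hGfull 0 1 1 (by decide) (by decide)
    linarith [hmix01, hmix10]
  -- reorganize the goal sum
  have hre : ∑ b : Fin 2, ∑ t : Fin d, (1/4 : ℝ) * ∑ c₁ : Fin 2, ∑ c₂ : Fin 2, Fval e A b c₁ c₂ t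
      = (1/4 : ℝ) * ∑ b : Fin 2, ∑ c₁ : Fin 2, ∑ c₂ : Fin 2, ∑ t, Fval e A b c₁ c₂ t := by
    rw [Finset.mul_sum]
    refine Finset.sum_congr rfl fun b _ => ?_
    rw [← Finset.mul_sum]
    congr 1
    rw [Finset.sum_comm]
    exact Finset.sum_congr rfl fun c₁ _ => Finset.sum_comm
  rw [hre]
  have hd' : (0:ℝ) < (d:ℝ) := by exact_mod_cast hd
  have hs0 : 0 ≤ Real.sqrt c := Real.sqrt_nonneg c
  calc (1 / (2 * (d:ℝ))) * ((1/4 : ℝ) * ∑ b : Fin 2, ∑ c₁ : Fin 2, ∑ c₂ : Fin 2, ∑ t, Fval e A b c₁ c₂ t)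
      ≤ (1 / (2 * (d:ℝ))) * ((1/4 : ℝ) * ((6 + 2 * Real.sqrt c) * d)) := by
        apply mul_le_mul_of_nonneg_left _ (by positivity)
        apply mul_le_mul_of_nonneg_left htot (by norm_num)
    _ = 3 / 4 + Real.sqrt c / 4 := by
        field_simp
        ring
end

section
/- Let {|e_0^0⟩, |e_1^0⟩} and {|e_0^1⟩, |e_1^1⟩} be two orthonormal bases of ℂ², and let c = max_{s,t} |⟨e_s^0 | e_t^1⟩|². For the single-qubit classical-verification ticket scheme with these bases (key (t,b) ∈ {0,1}×{0,1} uniform, ticket state |e_t^b⟩, two independent uniform challenges c_1, c_2 ∈ {0,1}, answers (a_1,a_2) accepted if a_j = t whenever c_j = b), there exists a counterfeiting strategy, given for each challenge pair by a POVM {A_{c_1 c_2}^{a_1 a_2}}_{a_1,a_2 ∈ {0,1}} on ℂ², achieving success probability exactly 3/4 + √c/4. -/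
open Matrix
open scoped ComplexOrder

set_option maxHeartbeats 1000000 in
/-- For two orthonormal bases `{|e_0^0⟩,|e_1^0⟩}` and `{|e_0^1⟩,|e_1^1⟩}` of `ℂ²`
with effective overlap `c = max_{s,t} |⟨e_s^0|e_t^1⟩|²`, there is a counterfeiting
strategy against the single-qubit classical-verification ticket scheme (key `(t,b)`
uniform, ticket `|e_t^b⟩`, two independent uniform challenges `c₁,c₂ ∈ {0,1}`,
answers `(a₁,a₂)` accepted iff `a_j = t` whenever `c_j = b`), given by POVMs
`{A_{c₁c₂}^{a₁a₂}}` on `ℂ²`, achieving success probability exactly `3/4 + √c/4`. -/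
theorem classical_verification_qubit_attack
    (e : Fin 2 → Fin 2 → (Fin 2 → ℂ))
    (he : ∀ b s t, star (e b s) ⬝ᵥ e b t = if s = t then 1 else 0)
    (c : ℝ)
    (hc : IsGreatest {x : ℝ | ∃ s t, x = Complex.normSq (star (e 0 s) ⬝ᵥ e 1 t)} c) :
    ∃ A : Fin 2 → Fin 2 → Fin 2 → Fin 2 → Matrix (Fin 2) (Fin 2) ℂ,
      (∀ c₁ c₂ a₁ a₂, (A c₁ c₂ a₁ a₂).PosSemidef) ∧
      (∀ c₁ c₂, ∑ a₁, ∑ a₂, A c₁ c₂ a₁ a₂ = 1) ∧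
      (1 / (2 * 2) : ℝ) * ∑ b : Fin 2, ∑ t : Fin 2,
          (1 / 4 : ℝ) * ∑ c₁ : Fin 2, ∑ c₂ : Fin 2, ∑ a₁ : Fin 2, ∑ a₂ : Fin 2,
            (if (c₁ = b → a₁ = t) ∧ (c₂ = b → a₂ = t)
              then (star (e b t) ⬝ᵥ (A c₁ c₂ a₁ a₂).mulVec (e b t)).re else 0)
        = 3 / 4 + Real.sqrt c / 4 := by
  classical
  obtain ⟨s, t₀, hst⟩ := hc.1
  -- basic dot product helpers
  have hsd : ∀ (x y : Fin 2 → ℂ) (a : ℂ), star (a • x) ⬝ᵥ y = star a * (star x ⬝ᵥ y) := by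
    intro x y a; simp [dotProduct, Fin.sum_univ_two, mul_add]; ring
  have hds : ∀ (x y : Fin 2 → ℂ) (a : ℂ), x ⬝ᵥ (a • y) = a * (x ⬝ᵥ y) := by
    intro x y a; simp [dotProduct, Fin.sum_univ_two, mul_add]; ring
  have hd : ∀ (x y : Fin 2 → ℂ), star x ⬝ᵥ y = star (star y ⬝ᵥ x) := by
    intro x y; simp [dotProduct, Finset.sum_comm, mul_comm]
  have hns : ∀ (x y : Fin 2 → ℂ),
      Complex.normSq (star x ⬝ᵥ y) = Complex.normSq (star y ⬝ᵥ x) := by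
    intro x y; rw [hd]; exact Complex.normSq_conj _
  have outer_form : ∀ (y x : Fin 2 → ℂ), star x ⬝ᵥ (vecMulVec y (star y)).mulVec x
      = (Complex.normSq (star x ⬝ᵥ y) : ℂ) := by
    intro y x
    have h : star x ⬝ᵥ (vecMulVec y (star y)).mulVec x = (star x ⬝ᵥ y) * (star y ⬝ᵥ x) := by
      simp [vecMulVec, dotProduct, mulVec, Finset.mul_sum, Finset.sum_mul]; ring
    have h2 : star y ⬝ᵥ x = star (star x ⬝ᵥ y) := hd y x
    rw [h, h2]
    rw [show (star x ⬝ᵥ y) * star (star x ⬝ᵥ y) = ((star x ⬝ᵥ y) : ℂ) * (starRingEnd ℂ) (star x ⬝ᵥ y) from rfl,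
      Complex.mul_conj]
  have outer_psd : ∀ (y : Fin 2 → ℂ), (vecMulVec y (star y)).PosSemidef := by
    intro y
    rw [vecMulVec_eq Unit]
    have h : replicateRow Unit (star y) = (replicateCol Unit y)ᴴ := by ext i j; simp
    rw [h]
    exact posSemidef_self_mul_conjTranspose _
  have hunit : ∀ b t, star (e b t) ⬝ᵥ e b t = 1 := by intro b t; simpa using he b t t
  -- completeness of each basis
  have hcomp : ∀ b : Fin 2,
      vecMulVec (e b 0) (star (e b 0)) + vecMulVec (e b 1) (star (e b 1)) = 1 := by
    intro b
    have h1 : (Matrix.of (fun i a => e b a i))ᴴ * (Matrix.of fun i a => e b a i) = 1 := by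
      ext i j
      have h := he b i j
      simp [Matrix.mul_apply, Matrix.conjTranspose_apply, dotProduct, Matrix.one_apply] at h ⊢
      exact h
    have h2 := mul_eq_one_comm.mp h1
    ext i j
    rw [show (1 : Matrix (Fin 2) (Fin 2) ℂ) = _ from h2.symm]
    simp [Matrix.mul_apply, vecMulVec_apply, Fin.sum_univ_two, Matrix.conjTranspose_apply]
  -- Parseval
  have hpar : ∀ (b : Fin 2) (x : Fin 2 → ℂ), star x ⬝ᵥ x = 1 →
      Complex.normSq (star (e b 0) ⬝ᵥ x) + Complex.normSq (star (e b 1) ⬝ᵥ x) = 1 := by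
    intro b x hx
    have h := congrArg (fun M : Matrix (Fin 2) (Fin 2) ℂ => star x ⬝ᵥ M.mulVec x) (hcomp b)
    simp only [Matrix.add_mulVec, dotProduct_add, Matrix.one_mulVec, hx, outer_form] at h
    rw [hns (e b 0) x, hns (e b 1) x]
    exact_mod_cast h
  have hsw : ∀ (g : Fin 2 → ℝ) (i : Fin 2), g i + g (i+1) = g 0 + g 1 := by
    intro g i; fin_cases i <;> simp [add_comm]
  -- the intermediate vector and its orthogonal complement
  have hvp : ∃ v p : Fin 2 → ℂ,
      vecMulVec v (star v) + vecMulVec p (star p) = 1 ∧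
      (star (e 0 s) ⬝ᵥ (vecMulVec v (star v)).mulVec (e 0 s)).re = (1 + Real.sqrt c)/2 ∧
      (star (e 0 (s+1)) ⬝ᵥ (vecMulVec v (star v)).mulVec (e 0 (s+1))).re = (1 - Real.sqrt c)/2 ∧
      (star (e 1 t₀) ⬝ᵥ (vecMulVec v (star v)).mulVec (e 1 t₀)).re = (1 + Real.sqrt c)/2 ∧
      (star (e 1 (t₀+1)) ⬝ᵥ (vecMulVec v (star v)).mulVec (e 1 (t₀+1))).re = (1 - Real.sqrt c)/2 := by
    have habs : Real.sqrt c = ‖star (e 0 s) ⬝ᵥ e 1 t₀‖ := by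
      rw [hst, Complex.norm_def]
    rw [habs]
    set α : ℂ := star (e 0 s) ⬝ᵥ e 1 t₀ with hα
    set r : ℝ := ‖α‖ with hrd
    have hr0 : 0 ≤ r := norm_nonneg α
    have hna : Complex.normSq α = r^2 := (Complex.sq_norm α).symm
    set β : ℂ := if α = 0 then 1 else (r : ℂ)/α with hβ
    have hβα : β * α = (r : ℂ) := by
      by_cases h : α = 0
      · simp [hβ, h, hrd, map_zero]
      · rw [hβ, if_neg h]; exact div_mul_cancel₀ _ h
    have hββ : star β * β = 1 := by
      by_cases h : α = 0
      · simp [hβ, h]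
      · have hr' : r ≠ 0 := by simpa [hrd] using (norm_ne_zero_iff.mpr h)
        rw [show star β * β = ((Complex.normSq β : ℝ) : ℂ) from
          (Complex.normSq_eq_conj_mul_self (z := β)).symm ▸ rfl]
        simp [hβ, h, Complex.normSq_div, hna]
        field_simp
    set ν : ℝ := Real.sqrt (2 + 2*r) with hν
    have h2r : (0:ℝ) < 2 + 2*r := by linarith
    have hν2 : ν^2 = 2 + 2*r := Real.sq_sqrt (le_of_lt h2r)
    have hνpos : 0 < ν := Real.sqrt_pos.mpr h2r
    set v : Fin 2 → ℂ := ((ν⁻¹ : ℝ) : ℂ) • (e 0 s + β • e 1 t₀) with hv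
    have d1 : star (e 0 s) ⬝ᵥ v = ((ν⁻¹ : ℝ) : ℂ) * (1 + (r:ℂ)) := by
      rw [hv, hds, dotProduct_add, hds, hunit 0 s, ← hα, hβα]
    have d2 : star (e 1 t₀) ⬝ᵥ v = ((ν⁻¹ : ℝ) : ℂ) * (star α + β) := by
      rw [hv, hds, dotProduct_add, hds, hunit 1 t₀, hd (e 1 t₀) (e 0 s), ← hα, mul_one]
    have hsd2 : ∀ (x y z : Fin 2 → ℂ) (a b : ℂ),
        star (a • (x + b • y)) ⬝ᵥ z = star a * ((star x ⬝ᵥ z) + star b * (star y ⬝ᵥ z)) := by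
      intro x y z a b
      simp [dotProduct, Fin.sum_univ_two, mul_add, add_mul]; ring
    have d3 : star v ⬝ᵥ v = 1 := by
      have expand : star v ⬝ᵥ v
          = ((ν⁻¹ : ℝ) : ℂ) * ((star (e 0 s) ⬝ᵥ v) + star β * (star (e 1 t₀) ⬝ᵥ v)) := by
        conv_lhs => rw [show (star v : Fin 2 → ℂ)
          = star (((ν⁻¹ : ℝ) : ℂ) • (e 0 s + β • e 1 t₀)) from by rw [← hv]]
        rw [hsd2]
        rw [show star (((ν⁻¹ : ℝ) : ℂ)) = (((ν⁻¹ : ℝ) : ℂ)) from Complex.conj_ofReal _]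
      rw [expand, d1, d2]
      have hconj2 : star β * star α = (r : ℂ) := by
        have h1 : star (β * α) = star ((r : ℂ)) := congrArg star hβα
        rw [star_mul'] at h1
        simpa [Complex.star_def, Complex.conj_ofReal] using h1
      have hkν : (((ν⁻¹:ℝ):ℂ)) * (((ν⁻¹:ℝ):ℂ)) * (2 + 2*(r:ℂ)) = 1 := by
        have hre : (ν⁻¹ * ν⁻¹ * (2 + 2*r) : ℝ) = 1 := by
          have hνne : ν ≠ 0 := ne_of_gt hνpos
          field_simp
          nlinarith [hν2]
        calc (((ν⁻¹:ℝ):ℂ)) * (((ν⁻¹:ℝ):ℂ)) * (2 + 2*(r:ℂ))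
            = ((ν⁻¹ * ν⁻¹ * (2 + 2*r) : ℝ) : ℂ) := by push_cast; ring
          _ = 1 := by rw [hre]; norm_num
      linear_combination (((ν⁻¹:ℝ):ℂ))^2 * hconj2 + (((ν⁻¹:ℝ):ℂ))^2 * hββ + hkν
    -- normSq values
    have m1 : Complex.normSq (star (e 0 s) ⬝ᵥ v) = (1 + r)/2 := by
      rw [d1, show ((ν⁻¹ : ℝ) : ℂ) * (1 + (r:ℂ)) = ((ν⁻¹ * (1 + r) : ℝ) : ℂ) by push_cast; ring,
        Complex.normSq_ofReal]
      have hνne : ν ≠ 0 := ne_of_gt hνpos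
      field_simp
      nlinarith [hν2]
    have m3 : Complex.normSq (star (e 1 t₀) ⬝ᵥ v) = (1 + r)/2 := by
      rw [d2, Complex.normSq_mul]
      have hkey : Complex.normSq (star α + β) = (1+r)^2 := by
        by_cases h : α = 0
        · have hr' : r = 0 := by simp [hrd, h]
          simp [hβ, h, hr']
        · have hr' : r ≠ 0 := by simpa [hrd] using (norm_ne_zero_iff.mpr h)
          have : star α + β = ((r^2 + r : ℝ) : ℂ)/α := by
            rw [hβ]; simp only [h, if_false]
            field_simp
            rw [show star α * α = ((Complex.normSq α : ℝ) : ℂ) from ?_]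
            · rw [hna]; push_cast; ring
            · exact Complex.normSq_eq_conj_mul_self.symm
          rw [this, Complex.normSq_div, Complex.normSq_ofReal, hna]
          field_simp
          ring
      rw [hkey, Complex.normSq_ofReal]
      have hνne : ν ≠ 0 := ne_of_gt hνpos
      field_simp
      nlinarith [hν2]
    have hp0 : Complex.normSq (star (e 0 0) ⬝ᵥ v) + Complex.normSq (star (e 0 1) ⬝ᵥ v) = 1 :=
      hpar 0 v d3
    have hp1 : Complex.normSq (star (e 1 0) ⬝ᵥ v) + Complex.normSq (star (e 1 1) ⬝ᵥ v) = 1 :=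
      hpar 1 v d3
    have m2 : Complex.normSq (star (e 0 (s+1)) ⬝ᵥ v) = (1 - r)/2 := by
      have h := hsw (fun i => Complex.normSq (star (e 0 i) ⬝ᵥ v)) s
      rw [m1] at h
      linarith [hp0]
    have m4 : Complex.normSq (star (e 1 (t₀+1)) ⬝ᵥ v) = (1 - r)/2 := by
      have h := hsw (fun i => Complex.normSq (star (e 1 i) ⬝ᵥ v)) t₀
      rw [m3] at h
      linarith [hp1]
    -- orthogonal complement
    clear_value v
    set p : Fin 2 → ℂ := ![-(star (v 1)), star (v 0)] with hp
    have hv2 : (starRingEnd ℂ) (v 0) * v 0 + (starRingEnd ℂ) (v 1) * v 1 = 1 := by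
      have := d3
      simpa [dotProduct, Fin.sum_univ_two, Complex.star_def] using this
    have hVp : vecMulVec v (star v) + vecMulVec p (star p) = 1 := by
      ext i j
      rw [Matrix.add_apply, vecMulVec_apply, vecMulVec_apply]
      fin_cases i <;> fin_cases j <;>
        simp [hp, vecMulVec_apply, Matrix.one_apply, star_neg, star_star, Complex.star_def] <;>
        first
          | ring1
          | linear_combination hv2
          | linear_combination -hv2
    refine ⟨v, p, hVp, ?_, ?_, ?_, ?_⟩ <;>
      rw [outer_form, Complex.ofReal_re]
    · exact m1
    · exact m2
    · exact m3
    · exact m4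
  obtain ⟨v, p, hVp, fV1, fV2, fV3, fV4⟩ := hvp
  obtain ⟨F, hF⟩ : ∃ F : (Fin 2 → ℂ) → Matrix (Fin 2) (Fin 2) ℂ → ℝ,
      ∀ (x : Fin 2 → ℂ) (M : Matrix (Fin 2) (Fin 2) ℂ), (star x ⬝ᵥ M.mulVec x).re = F x M :=
    ⟨_, fun _ _ => rfl⟩
  -- facts about p forms
  have fPgen : ∀ (b t : Fin 2),
      (star (e b t) ⬝ᵥ (vecMulVec p (star p)).mulVec (e b t)).re
        = 1 - (star (e b t) ⬝ᵥ (vecMulVec v (star v)).mulVec (e b t)).re := by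
    intro b t
    have h2 : (star (e b t) ⬝ᵥ (vecMulVec v (star v)).mulVec (e b t))
        + (star (e b t) ⬝ᵥ (vecMulVec p (star p)).mulVec (e b t)) = 1 := by
      rw [← dotProduct_add, ← Matrix.add_mulVec, hVp, Matrix.one_mulVec, hunit]
    have h3 := congrArg Complex.re h2
    simp only [Complex.add_re, Complex.one_re] at h3
    linarith
  have fP1 : (star (e 0 s) ⬝ᵥ (vecMulVec p (star p)).mulVec (e 0 s)).re = (1 - Real.sqrt c)/2 := by
    rw [fPgen, fV1]; ring
  have fP2 : (star (e 0 (s+1)) ⬝ᵥ (vecMulVec p (star p)).mulVec (e 0 (s+1))).re = (1 + Real.sqrt c)/2 := by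
    rw [fPgen, fV2]; ring
  have fP3 : (star (e 1 t₀) ⬝ᵥ (vecMulVec p (star p)).mulVec (e 1 t₀)).re = (1 - Real.sqrt c)/2 := by
    rw [fPgen, fV3]; ring
  have fP4 : (star (e 1 (t₀+1)) ⬝ᵥ (vecMulVec p (star p)).mulVec (e 1 (t₀+1))).re = (1 + Real.sqrt c)/2 := by
    rw [fPgen, fV4]; ring
  -- same-basis measurement forms
  have fE : ∀ (b x t : Fin 2),
      (star (e b t) ⬝ᵥ (vecMulVec (e b x) (star (e b x))).mulVec (e b t)).re
        = if x = t then 1 else 0 := by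
    intro b x t
    rw [outer_form, Complex.ofReal_re, he b t x]
    by_cases h : x = t
    · subst h; simp
    · simp [h, Ne.symm h]
  -- cross-basis Parseval (real form)
  have fX : ∀ (cb b t : Fin 2),
      (star (e b t) ⬝ᵥ (vecMulVec (e cb 0) (star (e cb 0))).mulVec (e b t)).re
      + (star (e b t) ⬝ᵥ (vecMulVec (e cb 1) (star (e cb 1))).mulVec (e b t)).re = 1 := by
    intro cb b t
    rw [outer_form, outer_form, Complex.ofReal_re, Complex.ofReal_re]
    rw [hns (e b t) (e cb 0), hns (e b t) (e cb 1)]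
    exact hpar cb (e b t) (hunit b t)
  -- sum helpers
  have hsum1 : ∀ (s' t' : Fin 2) (X Y : Matrix (Fin 2) (Fin 2) ℂ),
      (∑ a₁ : Fin 2, ∑ a₂ : Fin 2,
        if a₁ = s' ∧ a₂ = t' then X else if a₁ = s' + 1 ∧ a₂ = t' + 1 then Y else 0) = X + Y := by
    intro s' t' X Y; fin_cases s' <;> fin_cases t' <;> simp [Fin.sum_univ_two, add_comm]
  have hsum2 : ∀ (s' t' : Fin 2) (X Y : Matrix (Fin 2) (Fin 2) ℂ),
      (∑ a₁ : Fin 2, ∑ a₂ : Fin 2,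
        if a₂ = s' ∧ a₁ = t' then X else if a₂ = s' + 1 ∧ a₁ = t' + 1 then Y else 0) = X + Y := by
    intro s' t' X Y; fin_cases s' <;> fin_cases t' <;> simp [Fin.sum_univ_two, add_comm]
  have htwo : ∀ i j : Fin 2, i ≠ j → i = j + 1 := by decide
  have fV0 : ∀ i : Fin 2, (star (e 0 i) ⬝ᵥ (vecMulVec v (star v)).mulVec (e 0 i)).re
      = if i = s then (1 + Real.sqrt c)/2 else (1 - Real.sqrt c)/2 := by
    intro i; by_cases h : i = s
    · rw [if_pos h, h]; exact fV1
    · rw [if_neg h, htwo i s h]; exact fV2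
  have fVb : ∀ i : Fin 2, (star (e 1 i) ⬝ᵥ (vecMulVec v (star v)).mulVec (e 1 i)).re
      = if i = t₀ then (1 + Real.sqrt c)/2 else (1 - Real.sqrt c)/2 := by
    intro i; by_cases h : i = t₀
    · rw [if_pos h, h]; exact fV3
    · rw [if_neg h, htwo i t₀ h]; exact fV4
  have fP0 : ∀ i : Fin 2, (star (e 0 i) ⬝ᵥ (vecMulVec p (star p)).mulVec (e 0 i)).re
      = if i = s then (1 - Real.sqrt c)/2 else (1 + Real.sqrt c)/2 := by
    intro i; by_cases h : i = s
    · rw [if_pos h, h]; exact fP1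
    · rw [if_neg h, htwo i s h]; exact fP2
  have fPb : ∀ i : Fin 2, (star (e 1 i) ⬝ᵥ (vecMulVec p (star p)).mulVec (e 1 i)).re
      = if i = t₀ then (1 - Real.sqrt c)/2 else (1 + Real.sqrt c)/2 := by
    intro i; by_cases h : i = t₀
    · rw [if_pos h, h]; exact fP3
    · rw [if_neg h, htwo i t₀ h]; exact fP4
  refine ⟨fun c₁ c₂ a₁ a₂ =>
    if c₁ = c₂ then (if a₁ = a₂ then vecMulVec (e c₁ a₁) (star (e c₁ a₁)) else 0)
    else if c₁ = 0 then
      (if a₁ = s ∧ a₂ = t₀ then vecMulVec v (star v)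
       else if a₁ = s + 1 ∧ a₂ = t₀ + 1 then vecMulVec p (star p) else 0)
    else
      (if a₂ = s ∧ a₁ = t₀ then vecMulVec v (star v)
       else if a₂ = s + 1 ∧ a₁ = t₀ + 1 then vecMulVec p (star p) else 0), ?_, ?_, ?_⟩
  · intro c₁ c₂ a₁ a₂
    dsimp only
    split_ifs <;> first | exact outer_psd _ | exact Matrix.PosSemidef.zero
  · intro c₁ c₂
    dsimp only
    by_cases h : c₁ = c₂
    · subst h
      simp only [eq_self_iff_true, if_true]
      simp only [Fin.sum_univ_two]
      simp [hcomp c₁]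
    · simp only [if_neg h]
      by_cases h0 : c₁ = 0
      · simp only [if_pos h0]
        rw [hsum1 s t₀]
        exact hVp
      · simp only [if_neg h0]
        rw [hsum2 s t₀]
        exact hVp
  · clear fV1 fV2 fV3 fV4 fP1 fP2 fP3 fP4 fPgen hst
    have fZ : ∀ x : Fin 2 → ℂ, (star x ⬝ᵥ (0 : Matrix (Fin 2) (Fin 2) ℂ).mulVec x).re = 0 := by
      intro x; simp [Matrix.zero_mulVec]
    simp only [hF] at fE fX fV0 fVb fP0 fPb fZ ⊢
    fin_cases s <;> fin_cases t₀ <;>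
      simp only [Fin.sum_univ_two] <;>
      simp [fE, fV0, fVb, fP0, fPb, fZ] <;>
      linarith [fX 0 1 0, fX 0 1 1, fX 1 0 0, fX 1 0 1]
end
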